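/- arXiv:2309.07734 — 5 statements merged into one kernel-verified Lean document; each statement's English description precedes it below -/
import Mathlib

section
/- Let k, n ≥ 1 be positive integers and let a, b be real numbers with a + b ≠ 0. Then ∑_{m=0}^{2n} C(2n, m) a^m b^{2n-m} (m - n)^{2k} = (a + b)^{2n} [((a - b)/(a + b))^{2k} n^{2k} + p(n)], where p is a polynomial in n of degree at most 2k - 1 whose coefficients depend only on a, b and k (not on n). -/
open Polynomial Finset

/-- Every polynomial of degree `< d` is a linear combination of the
descending Pochhammer polynomials of degree `< d`. -/
lemma desc_basis : ∀ d : ℕ, ∀ f : Polynomial ℝ, f.degree < (d : ℕ) →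
    ∃ c : ℕ → ℝ, f = ∑ j ∈ Finset.range d, Polynomial.C (c j) * descPochhammer ℝ j := by
  intro d
  induction d with
  | zero =>
    intro f hf
    have : f = 0 := by
      have := Nat.WithBot.lt_zero_iff.mp (by exact_mod_cast hf)
      exact Polynomial.degree_eq_bot.mp this
    exact ⟨fun _ => 0, by simp [this]⟩
  | succ d ih =>
    intro f hf
    set g : Polynomial ℝ := f - Polynomial.C (f.coeff d) * descPochhammer ℝ d with hg
    have hdesc : (descPochhammer ℝ d).natDegree = d := descPochhammer_natDegree ℝ d
    have hgdeg : g.degree < (d : ℕ) := by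
      rw [Polynomial.degree_lt_iff_coeff_zero]
      intro e he
      rcases eq_or_lt_of_le he with he' | he'
      · have hdd : (descPochhammer ℝ d).coeff d = 1 := by
          have := (monic_descPochhammer ℝ d).coeff_natDegree
          rwa [hdesc] at this
        subst he'
        simp [hg, hdd]
      · have h1 : f.coeff e = 0 := by
          apply Polynomial.coeff_eq_zero_of_degree_lt
          exact lt_of_lt_of_le hf (by exact_mod_cast he')
        have h2 : (descPochhammer ℝ d).coeff e = 0 := by
          apply Polynomial.coeff_eq_zero_of_natDegree_lt
          rw [hdesc]; exact he'
        simp [hg, h1, h2]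
    obtain ⟨c, hc⟩ := ih g hgdeg
    refine ⟨fun j => if j = d then f.coeff d else c j, ?_⟩
    rw [Finset.sum_range_succ]
    have : ∑ j ∈ Finset.range d, Polynomial.C (if j = d then f.coeff d else c j) *
        descPochhammer ℝ j = ∑ j ∈ Finset.range d, Polynomial.C (c j) * descPochhammer ℝ j := by
      apply Finset.sum_congr rfl
      intro j hj
      have : j ≠ d := Nat.ne_of_lt (Finset.mem_range.mp hj)
      simp [this]
    rw [this, ← hc]
    simp [hg]

/-- Expansion of `X^i` in the descending Pochhammer basis, with leading coefficient 1. -/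
lemma stirling_exists (i : ℕ) : ∃ c : ℕ → ℝ, c i = 1 ∧
    (Polynomial.X : Polynomial ℝ) ^ i =
      ∑ j ∈ Finset.range (i + 1), Polynomial.C (c j) * descPochhammer ℝ j := by
  have hdesc : (descPochhammer ℝ i).natDegree = i := descPochhammer_natDegree ℝ i
  have hdeg : ((Polynomial.X : Polynomial ℝ) ^ i - descPochhammer ℝ i).degree < (i : ℕ) := by
    rw [Polynomial.degree_lt_iff_coeff_zero]
    intro e he
    rcases eq_or_lt_of_le he with he' | he'
    · have hdd : (descPochhammer ℝ i).coeff i = 1 := by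
        have := (monic_descPochhammer ℝ i).coeff_natDegree
        rwa [hdesc] at this
      subst he'
      simp [Polynomial.coeff_X_pow, hdd]
    · have h2 : (descPochhammer ℝ i).coeff e = 0 := by
        apply Polynomial.coeff_eq_zero_of_natDegree_lt
        rw [hdesc]; exact he'
      simp [Polynomial.coeff_X_pow, h2, Nat.ne_of_gt he']
  obtain ⟨c, hc⟩ := desc_basis i _ hdeg
  refine ⟨fun j => if j = i then 1 else c j, by simp, ?_⟩
  rw [Finset.sum_range_succ]
  have : ∑ j ∈ Finset.range i, Polynomial.C (if j = i then (1:ℝ) else c j) *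
      descPochhammer ℝ j = ∑ j ∈ Finset.range i, Polynomial.C (c j) * descPochhammer ℝ j := by
    apply Finset.sum_congr rfl
    intro j hj
    have : j ≠ i := Nat.ne_of_lt (Finset.mem_range.mp hj)
    simp [this]
  rw [this, ← hc]
  simp

lemma key_nat (N j t : ℕ) (h : j + t ≤ N) :
    N.choose (j + t) * (j + t).descFactorial j = N.descFactorial j * (N - j).choose t := by
  have hsk : j ≤ j + t := Nat.le_add_right j t
  have := (Nat.choose_mul hsk : N.choose (j + t) * (j + t).choose j = _)
  rw [Nat.add_sub_cancel_left] at this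
  rw [Nat.descFactorial_eq_factorial_mul_choose, Nat.descFactorial_eq_factorial_mul_choose]
  calc N.choose (j + t) * (Nat.factorial j * (j + t).choose j)
      = Nat.factorial j * (N.choose (j + t) * (j + t).choose j) := by ring
    _ = Nat.factorial j * (N.choose j * (N - j).choose t) := by rw [this]
    _ = Nat.factorial j * N.choose j * (N - j).choose t := by ring

/-- The factorial-moment identity for binomial sums. -/
lemma moment (a b : ℝ) (N j : ℕ) :
    ∑ m ∈ Finset.range (N + 1),
        (N.choose m : ℝ) * a ^ m * b ^ (N - m) * (descPochhammer ℝ j).eval (m : ℝ)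
      = (N.descFactorial j : ℝ) * a ^ j * (a + b) ^ (N - j) := by
  have heval : ∀ m : ℕ, (descPochhammer ℝ j).eval (m : ℝ) = (m.descFactorial j : ℝ) := fun m =>
    descPochhammer_eval_eq_descFactorial ℝ m j
  by_cases hjN : j ≤ N
  · have hsub : Finset.Ico j (N + 1) ⊆ Finset.range (N + 1) := by
      intro x hx
      rw [Finset.mem_range]
      exact (Finset.mem_Ico.mp hx).2
    rw [← Finset.sum_subset hsub (by
      intro x hx hx'
      rw [Finset.mem_range] at hx
      have hxj : x < j := by
        by_contra hcon
        exact hx' (Finset.mem_Ico.mpr ⟨not_lt.mp hcon, hx⟩)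
      rw [heval x, Nat.descFactorial_eq_zero_iff_lt.mpr hxj]
      simp)]
    rw [Finset.sum_Ico_eq_sum_range]
    have hrange : N + 1 - j = N - j + 1 := by omega
    rw [hrange, add_pow, Finset.mul_sum]
    apply Finset.sum_congr rfl
    intro t ht
    rw [Finset.mem_range] at ht
    have htN : j + t ≤ N := by omega
    rw [heval (j + t)]
    have hkey := key_nat N j t htN
    have hcast : (N.choose (j + t) : ℝ) * ((j + t).descFactorial j : ℝ)
        = (N.descFactorial j : ℝ) * ((N - j).choose t : ℝ) := by exact_mod_cast hkey
    have hbexp : N - (j + t) = N - j - t := by omega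
    have hapow : a ^ (j + t) = a ^ j * a ^ t := pow_add a j t
    rw [hbexp, hapow]
    linear_combination (a ^ j * a ^ t * b ^ (N - j - t)) * hcast
  · push_neg at hjN
    have hNj : N.descFactorial j = 0 := Nat.descFactorial_eq_zero_iff_lt.mpr hjN
    rw [hNj]
    simp only [Nat.cast_zero, zero_mul]
    apply Finset.sum_eq_zero
    intro m hm
    rw [Finset.mem_range] at hm
    have : m < j := by omega
    rw [heval m, Nat.descFactorial_eq_zero_iff_lt.mpr this]
    simp

lemma pow_fact (a b : ℝ) (hab : a + b ≠ 0) (N j : ℕ) :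
    (N.descFactorial j : ℝ) * a ^ j * (a + b) ^ (N - j)
      = (a + b) ^ N * (a / (a + b)) ^ j * (N.descFactorial j : ℝ) := by
  by_cases h : j ≤ N
  · have key : (a + b) ^ N = (a + b) ^ (N - j) * (a + b) ^ j := by
      rw [← pow_add, Nat.sub_add_cancel h]
    rw [key, div_pow]
    have h2 : (a + b) ^ j ≠ 0 := pow_ne_zero _ hab
    field_simp
  · have h1 : N.descFactorial j = 0 := Nat.descFactorial_eq_zero_iff_lt.mpr (by omega)
    simp [h1]

theorem binomial_sum_moment_asymptotic (k : ℕ) (hk : 1 ≤ k) (a b : ℝ) (hab : a + b ≠ 0) :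
    ∃ p : Polynomial ℝ, p.degree ≤ (2 * k - 1 : ℕ) ∧
      ∀ n : ℕ, 1 ≤ n →
        ∑ m ∈ Finset.range (2 * n + 1),
            (Nat.choose (2 * n) m : ℝ) * a ^ m * b ^ (2 * n - m) * ((m : ℝ) - (n : ℝ)) ^ (2 * k)
          = (a + b) ^ (2 * n) *
              (((a - b) / (a + b)) ^ (2 * k) * (n : ℝ) ^ (2 * k) + p.eval (n : ℝ)) := by
  classical
  -- Stirling-type coefficients
  choose s hs1 hs2 using stirling_exists
  set c : ℝ := ((a - b) / (a + b)) ^ (2 * k) with hc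
  -- auxiliary polynomials
  set g : ℕ → Polynomial ℝ :=
    fun j => (descPochhammer ℝ j).comp (Polynomial.C 2 * Polynomial.X) with hgdef
  set u : ℕ → ℕ → ℝ := fun i j =>
    ((2 * k).choose i : ℝ) * (-1) ^ (2 * k - i) * s i j * (a / (a + b)) ^ j with hu
  set Q : Polynomial ℝ :=
    ∑ i ∈ Finset.range (2 * k + 1), ∑ j ∈ Finset.range (i + 1),
      Polynomial.C (u i j) * (g j * Polynomial.X ^ (2 * k - i)) with hQ
  have hgnd : ∀ j, (g j).natDegree = j := by
    intro j
    rw [hgdef]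
    simp only
    rw [Polynomial.natDegree_comp, descPochhammer_natDegree]
    have : (Polynomial.C (2:ℝ) * Polynomial.X).natDegree = 1 := by
      simpa using Polynomial.natDegree_C_mul_X (2:ℝ) two_ne_zero
    rw [this, mul_one]
  have hgcoeff : ∀ j e, j < e → (g j).coeff e = 0 := by
    intro j e hje
    apply Polynomial.coeff_eq_zero_of_natDegree_lt
    rw [hgnd j]; exact hje
  have hglead : ∀ j, (g j).coeff j = 2 ^ j := by
    intro j
    have hq1 : (Polynomial.C (2:ℝ) * Polynomial.X).natDegree = 1 := by
      simpa using Polynomial.natDegree_C_mul_X (2:ℝ) two_ne_zero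
    have h3 : (g j).coeff j = (g j).leadingCoeff := by
      rw [Polynomial.leadingCoeff, hgnd j]
    have h4 : (Polynomial.C (2:ℝ) * Polynomial.X).leadingCoeff = 2 := by
      rw [Polynomial.leadingCoeff, hq1]
      simp
    have h5 := Polynomial.leadingCoeff_comp (p := descPochhammer ℝ j)
      (q := Polynomial.C (2:ℝ) * Polynomial.X) (by rw [hq1]; norm_num)
    rw [h3, hgdef]
    simp only
    rw [h5, h4, (monic_descPochhammer ℝ j).leadingCoeff, descPochhammer_natDegree, one_mul]
  -- coefficient of Q at degree d ≥ 2k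
  have hQcoeff : ∀ d, 2 * k ≤ d →
      Q.coeff d = if d = 2 * k then c else 0 := by
    intro d hd
    rw [hQ]
    rw [Polynomial.finset_sum_coeff]
    have hterm : ∀ i ∈ Finset.range (2 * k + 1),
        (∑ j ∈ Finset.range (i + 1),
          Polynomial.C (u i j) * (g j * Polynomial.X ^ (2 * k - i))).coeff d
        = if d = 2 * k then u i i * 2 ^ i else 0 := by
      intro i hi
      rw [Finset.mem_range] at hi
      have hik : i ≤ 2 * k := by omega
      rw [Polynomial.finset_sum_coeff]
      have hjterm : ∀ j ∈ Finset.range (i + 1),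
          (Polynomial.C (u i j) * (g j * Polynomial.X ^ (2 * k - i))).coeff d
          = if j = i then (if d = 2 * k then u i i * 2 ^ i else 0) else 0 := by
        intro j hj
        rw [Finset.mem_range] at hj
        have hji : j ≤ i := by omega
        rw [Polynomial.coeff_C_mul, Polynomial.coeff_mul_X_pow']
        have hle : 2 * k - i ≤ d := by omega
        rw [if_pos hle]
        by_cases hdk : d = 2 * k
        · subst hdk
          have hcki : 2 * k - (2 * k - i) = i := by omega
          rw [hcki]
          by_cases hji' : j = i
          · subst hji'
            rw [hglead j, if_pos rfl, if_pos rfl]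
          · rw [hgcoeff j i (by omega), if_neg hji']
            ring
        · have : i < d - (2 * k - i) := by omega
          rw [hgcoeff j _ (by omega)]
          simp [hdk]
      rw [Finset.sum_congr rfl hjterm,
        Finset.sum_ite_eq' (Finset.range (i + 1)) i
          (fun _ => if d = 2 * k then u i i * 2 ^ i else 0),
        if_pos (Finset.mem_range.mpr (Nat.lt_succ_self i))]
    rw [Finset.sum_congr rfl hterm]
    by_cases hdk : d = 2 * k
    · subst hdk
      simp only [if_pos rfl, if_true]
      -- ∑ i, u i i * 2^i = c
      have hui : ∀ i ∈ Finset.range (2 * k + 1), u i i * 2 ^ i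
          = (2 * a / (a + b)) ^ i * (-1) ^ (2 * k - i) * ((2 * k).choose i : ℝ) := by
        intro i hi
        rw [hu]
        simp only
        rw [hs1 i]
        have h2 : (2 * a / (a + b)) ^ i = 2 ^ i * (a / (a + b)) ^ i := by
          rw [← mul_pow]; ring_nf
        rw [h2]
        ring
      rw [Finset.sum_congr rfl hui, ← add_pow, hc]
      congr 1
      field_simp
      ring
    · simp [hdk]
  refine ⟨Q - Polynomial.C c * Polynomial.X ^ (2 * k), ?_, ?_⟩
  · -- degree bound
    rw [Polynomial.degree_le_iff_coeff_zero]
    intro d hd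
    have hd' : 2 * k - 1 < d := by exact_mod_cast hd
    have hdk : 2 * k ≤ d := by omega
    rw [Polynomial.coeff_sub, Polynomial.coeff_C_mul, Polynomial.coeff_X_pow, hQcoeff d hdk]
    by_cases h : d = 2 * k
    · subst h; simp
    · simp [h]
  · -- evaluation identity
    intro n hn
    -- RHS equals (a+b)^(2n) * Q.eval n
    have hRHS : (a + b) ^ (2 * n) *
        (c * (n : ℝ) ^ (2 * k) + (Q - Polynomial.C c * Polynomial.X ^ (2 * k)).eval (n : ℝ))
        = (a + b) ^ (2 * n) * Q.eval (n : ℝ) := by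
      congr 1
      rw [Polynomial.eval_sub, Polynomial.eval_mul, Polynomial.eval_C, Polynomial.eval_pow,
        Polynomial.eval_X]
      ring
    rw [hRHS]
    -- expand LHS
    have hstep1 : ∀ m : ℕ, ((m : ℝ) - (n : ℝ)) ^ (2 * k)
        = ∑ i ∈ Finset.range (2 * k + 1), ∑ j ∈ Finset.range (i + 1),
            s i j * (descPochhammer ℝ j).eval (m : ℝ) *
              ((-1) ^ (2 * k - i) * (n : ℝ) ^ (2 * k - i) * ((2 * k).choose i : ℝ)) := by
      intro m
      rw [sub_eq_add_neg, add_pow]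
      apply Finset.sum_congr rfl
      intro i _
      have hXi : ((m : ℝ)) ^ i = ∑ j ∈ Finset.range (i + 1),
          s i j * (descPochhammer ℝ j).eval (m : ℝ) := by
        have := congrArg (Polynomial.eval (m : ℝ)) (hs2 i)
        rw [Polynomial.eval_pow, Polynomial.eval_X, Polynomial.eval_finset_sum] at this
        rw [this]
        apply Finset.sum_congr rfl
        intro j _
        rw [Polynomial.eval_mul, Polynomial.eval_C]
      rw [hXi, Finset.sum_mul, Finset.sum_mul]
      apply Finset.sum_congr rfl
      intro j _
      rw [neg_pow]
      ring
    calc ∑ m ∈ Finset.range (2 * n + 1),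
          ((2 * n).choose m : ℝ) * a ^ m * b ^ (2 * n - m) * ((m : ℝ) - (n : ℝ)) ^ (2 * k)
        = ∑ m ∈ Finset.range (2 * n + 1), ∑ i ∈ Finset.range (2 * k + 1),
            ∑ j ∈ Finset.range (i + 1),
            (((2 * n).choose m : ℝ) * a ^ m * b ^ (2 * n - m) *
              (descPochhammer ℝ j).eval (m : ℝ)) *
              (s i j * ((-1) ^ (2 * k - i) * (n : ℝ) ^ (2 * k - i) * ((2 * k).choose i : ℝ))) := by
          apply Finset.sum_congr rfl
          intro m _
          rw [hstep1 m, Finset.mul_sum]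
          apply Finset.sum_congr rfl
          intro i _
          rw [Finset.mul_sum]
          apply Finset.sum_congr rfl
          intro j _
          ring
      _ = ∑ i ∈ Finset.range (2 * k + 1), ∑ j ∈ Finset.range (i + 1),
            (∑ m ∈ Finset.range (2 * n + 1),
              ((2 * n).choose m : ℝ) * a ^ m * b ^ (2 * n - m) *
                (descPochhammer ℝ j).eval (m : ℝ)) *
              (s i j * ((-1) ^ (2 * k - i) * (n : ℝ) ^ (2 * k - i) * ((2 * k).choose i : ℝ))) := by
          rw [Finset.sum_comm]
          apply Finset.sum_congr rfl
          intro i _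
          rw [Finset.sum_comm]
          apply Finset.sum_congr rfl
          intro j _
          rw [Finset.sum_mul]
      _ = (a + b) ^ (2 * n) * Q.eval (n : ℝ) := by
          rw [hQ, Polynomial.eval_finset_sum, Finset.mul_sum]
          apply Finset.sum_congr rfl
          intro i _
          rw [Polynomial.eval_finset_sum, Finset.mul_sum]
          apply Finset.sum_congr rfl
          intro j _
          rw [moment a b (2 * n) j]
          rw [Polynomial.eval_mul, Polynomial.eval_C, Polynomial.eval_mul, Polynomial.eval_pow,
            Polynomial.eval_X]
          have hgeval : (g j).eval (n : ℝ) = ((2 * n).descFactorial j : ℝ) := by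
            rw [hgdef]
            simp only
            rw [Polynomial.eval_comp, Polynomial.eval_mul, Polynomial.eval_C, Polynomial.eval_X]
            have : (2 : ℝ) * (n : ℝ) = ((2 * n : ℕ) : ℝ) := by push_cast; ring
            rw [this, descPochhammer_eval_eq_descFactorial]
          rw [hgeval, hu]
          simp only
          have := pow_fact a b hab (2 * n) j
          linear_combination (s i j * ((-1:ℝ) ^ (2 * k - i) * (n : ℝ) ^ (2 * k - i) *
            ((2 * k).choose i : ℝ))) * this
end

section
/- For every integer k ≥ 1 and every real x, ∑_{n=0}^{∞} n^{2k} x^n / (2n)! = (x/2) · ₂ₖ₋₁F₂ₖ(2, …, 2; 1, …, 1, 3/2; x/4), where the generalized hypergeometric function has 2k−1 upper parameters equal to 2 and 2k lower parameters consisting of 2k−1 copies of 1 and one copy of 3/2. -/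
open Polynomial

lemma poch_eval_two (j : ℕ) : (ascPochhammer ℝ j).eval (2 : ℝ) = ((j + 1).factorial : ℝ) := by
  have h := factorial_mul_ascPochhammer ℝ 1 j
  norm_num at h
  rw [Nat.add_comm] at h
  exact h

lemma poch_eval_three_half (j : ℕ) :
    (ascPochhammer ℝ j).eval (3 / 2 : ℝ) * (4 ^ j * (j.factorial : ℝ))
      = ((2 * j + 1).factorial : ℝ) := by
  induction j with
  | zero => simp
  | succ j ih =>
    rw [ascPochhammer_succ_eval]
    have hf : ((2 * (j + 1) + 1).factorial : ℝ)
        = (2 * j + 3) * ((2 * j + 2) * ((2 * j + 1).factorial : ℝ)) := by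
      have : 2 * (j + 1) + 1 = (2 * j + 2) + 1 := by omega
      rw [this, Nat.factorial_succ, Nat.factorial_succ]
      push_cast
      ring
    rw [hf, Nat.factorial_succ]
    push_cast
    linear_combination (4 * ((3:ℝ)/2 + j) * (j + 1)) * ih

theorem series_eq_hypergeometric (k : ℕ) (hk : 1 ≤ k) (x : ℝ) :
    ∑' n : ℕ, (n : ℝ) ^ (2 * k) * x ^ n / (Nat.factorial (2 * n) : ℝ)
      = (x / 2) * ∑' j : ℕ,
          ((ascPochhammer ℝ j).eval (2 : ℝ)) ^ (2 * k - 1) /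
            (((ascPochhammer ℝ j).eval (1 : ℝ)) ^ (2 * k - 1) *
              ((ascPochhammer ℝ j).eval (3 / 2 : ℝ)))
            * (x / 4) ^ j / (Nat.factorial j : ℝ) := by
  have hshift := Function.Injective.tsum_eq (g := Nat.succ) Nat.succ_injective
    (f := fun n : ℕ => (n : ℝ) ^ (2 * k) * x ^ n / (Nat.factorial (2 * n) : ℝ)) ?_
  · rw [← hshift, ← tsum_mul_left]
    refine tsum_congr fun j => ?_
    have hC := poch_eval_three_half j
    have hCne : (ascPochhammer ℝ j).eval (3 / 2 : ℝ) ≠ 0 := by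
      intro h
      rw [h, zero_mul] at hC
      exact (Nat.cast_ne_zero.mpr (Nat.factorial_ne_zero _)).symm hC
    have hm : 2 * k = (2 * k - 1) + 1 := by omega
    rw [poch_eval_two, ascPochhammer_eval_one]
    have h2f : ((2 * Nat.succ j).factorial : ℝ)
        = (2 * j + 2) * ((2 * j + 1).factorial : ℝ) := by
      have : 2 * Nat.succ j = (2 * j + 1) + 1 := by omega
      rw [this, Nat.factorial_succ]
      push_cast
      ring
    have hjf : ((j + 1).factorial : ℝ) = (j + 1) * (j.factorial : ℝ) := by
      rw [Nat.factorial_succ]; push_cast; ring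
    have hfne : (j.factorial : ℝ) ≠ 0 := Nat.cast_ne_zero.mpr (Nat.factorial_ne_zero _)
    rw [h2f, hjf, hm, mul_pow]
    set m := 2 * k - 1 with hmdef
    push_cast
    have h4 : (4 : ℝ) ^ j ≠ 0 := by positivity
    field_simp
    rw [← hC, div_pow, pow_succ, pow_succ]
    field_simp
  · intro n hn
    rcases Nat.eq_zero_or_pos n with h0 | h0
    · exfalso
      apply hn
      subst h0
      have : (0 : ℝ) ^ (2 * k) = 0 := zero_pow (by omega)
      simp [this]
    · exact ⟨n - 1, by omega⟩
end

section
/- For every integer k ≥ 1, as x → ∞, ∑_{n=0}^{∞} n^{2k} x^n / (2n)! = (1/2^{2k+1}) x^k e^{√x} (1 + O(x^{-1/2})). That is, there exist constants M, x₀ > 0 such that for all x ≥ x₀, |∑_{n=0}^{∞} n^{2k} x^n/(2n)! − (1/2^{2k+1}) x^k e^{√x}| ≤ M x^{k−1/2} e^{√x}. -/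
open Finset

lemma desc_key (m j : ℕ) : m * Nat.descFactorial m j
    = Nat.descFactorial m (j + 1) + j * Nat.descFactorial m j := by
  rcases le_or_gt j m with h | h
  · rw [Nat.descFactorial_succ, ← Nat.add_mul, Nat.sub_add_cancel h]
  · rw [Nat.descFactorial_eq_zero_iff_lt.2 h,
      Nat.descFactorial_eq_zero_iff_lt.2 (h.trans (Nat.lt_succ_self j))]
    simp

lemma stirling_decomp (p : ℕ) : ∃ c : ℕ → ℕ, c p = 1 ∧ (∀ j, p < j → c j = 0) ∧
    ∀ m : ℕ, m ^ p = ∑ j ∈ Finset.range (p + 1), c j * Nat.descFactorial m j := by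
  induction p with
  | zero =>
    exact ⟨fun j => if j = 0 then 1 else 0, rfl,
      fun j hj => if_neg (by omega), fun m => by simp⟩
  | succ p ih =>
    obtain ⟨c, hc1, hc0, hsum⟩ := ih
    refine ⟨fun j => j * c j + (if j = 0 then 0 else c (j - 1)), ?_, ?_, ?_⟩
    · simp [hc0 (p + 1) (Nat.lt_succ_self p), hc1]
    · intro j hj
      have hj0 : j ≠ 0 := by omega
      simp [hj0, hc0 j (by omega), hc0 (j - 1) (by omega)]
    · intro m
      have step : m ^ (p + 1)
          = ∑ j ∈ range (p + 1), (c j * Nat.descFactorial m (j + 1)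
            + j * c j * Nat.descFactorial m j) := by
        rw [pow_succ, hsum, Finset.sum_mul]
        refine Finset.sum_congr rfl fun j _ => ?_
        have h := desc_key m j
        calc c j * Nat.descFactorial m j * m = c j * (m * Nat.descFactorial m j) := by ring
          _ = c j * (Nat.descFactorial m (j + 1) + j * Nat.descFactorial m j) := by rw [h]
          _ = _ := by ring
      rw [step, Finset.sum_add_distrib]
      have e1 : ∑ j ∈ range (p + 1), c j * Nat.descFactorial m (j + 1)
          = ∑ j ∈ range (p + 2), (if j = 0 then 0 else c (j - 1)) * Nat.descFactorial m j := by
        conv_rhs => rw [Finset.sum_range_succ']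
        simp
      have e2 : ∑ j ∈ range (p + 1), j * c j * Nat.descFactorial m j
          = ∑ j ∈ range (p + 2), j * c j * Nat.descFactorial m j := by
        rw [Finset.sum_range_succ (n := p + 1), hc0 (p + 1) (Nat.lt_succ_self p)]
        simp
      rw [e1, e2, ← Finset.sum_add_distrib]
      refine Finset.sum_congr rfl fun j _ => ?_
      ring

lemma hasSum_aux (t : ℝ) (j : ℕ) :
    HasSum (fun n : ℕ => (Nat.descFactorial (2 * n) j : ℝ) * t ^ (2 * n) / (Nat.factorial (2 * n) : ℝ))
      (t ^ j * (if Even j then Real.cosh t else Real.sinh t)) := by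
  set f : ℕ → ℝ := fun n => (Nat.descFactorial (2 * n) j : ℝ) * t ^ (2 * n) / (Nat.factorial (2 * n) : ℝ) with hf
  rcases Nat.even_or_odd j with ⟨a, ha⟩ | ⟨a, ha⟩
  · -- even: j = a + a
    have hshift : ∀ n : ℕ, f (n + a) = t ^ j * (t ^ (2 * n) / (Nat.factorial (2 * n) : ℝ)) := by
      intro n
      have hle : j ≤ 2 * (n + a) := by omega
      have hfac : (Nat.factorial (2 * n) : ℝ) * (Nat.descFactorial (2 * (n + a)) j : ℝ)
          = (Nat.factorial (2 * (n + a)) : ℝ) := by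
        have h3 := Nat.factorial_mul_descFactorial hle
        have h2 : 2 * (n + a) - j = 2 * n := by omega
        rw [h2] at h3
        exact_mod_cast h3
      have hfacpos : (0:ℝ) < (Nat.factorial (2 * n) : ℝ) := by positivity
      have hfacpos2 : (0:ℝ) < (Nat.factorial (2 * (n + a)) : ℝ) := by positivity
      have hpow : t ^ (2 * (n + a)) = t ^ j * t ^ (2 * n) := by
        rw [← pow_add]; congr 1; omega
      show (Nat.descFactorial (2 * (n + a)) j : ℝ) * t ^ (2 * (n + a)) / (Nat.factorial (2 * (n + a)) : ℝ)
          = t ^ j * (t ^ (2 * n) / (Nat.factorial (2 * n) : ℝ))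
      rw [hpow, mul_div_assoc' (t ^ j), div_eq_div_iff hfacpos2.ne' hfacpos.ne', ← hfac]
      ring
    have hzero : ∀ i ∈ range a, f i = 0 := by
      intro i hi
      have hlt : 2 * i < j := by have := Finset.mem_range.1 hi; omega
      simp [hf, Nat.descFactorial_eq_zero_iff_lt.2 hlt]
    have hcosh : HasSum (fun n : ℕ => f (n + a)) (t ^ j * Real.cosh t) := by
      have h := (Real.hasSum_cosh t).mul_left (t ^ j)
      rw [funext hshift]
      exact h
    have hfin : HasSum f (t ^ j * Real.cosh t) := by
      have h2 := (hasSum_nat_add_iff (f := f) a).1 hcosh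
      rwa [Finset.sum_eq_zero hzero, add_zero] at h2
    rw [if_pos ⟨a, ha⟩]
    exact hfin
  · -- odd: j = 2 * a + 1
    have hshift : ∀ n : ℕ, f (n + (a + 1)) = t ^ j * (t ^ (2 * n + 1) / (Nat.factorial (2 * n + 1) : ℝ)) := by
      intro n
      have hle : j ≤ 2 * (n + (a + 1)) := by omega
      have hfac : (Nat.factorial (2 * n + 1) : ℝ) * (Nat.descFactorial (2 * (n + (a + 1))) j : ℝ)
          = (Nat.factorial (2 * (n + (a + 1))) : ℝ) := by
        have h3 := Nat.factorial_mul_descFactorial hle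
        have h2 : 2 * (n + (a + 1)) - j = 2 * n + 1 := by omega
        rw [h2] at h3
        exact_mod_cast h3
      have hfacpos : (0:ℝ) < (Nat.factorial (2 * n + 1) : ℝ) := by positivity
      have hfacpos2 : (0:ℝ) < (Nat.factorial (2 * (n + (a + 1))) : ℝ) := by positivity
      have hpow : t ^ (2 * (n + (a + 1))) = t ^ j * t ^ (2 * n + 1) := by
        rw [← pow_add]; congr 1; omega
      show (Nat.descFactorial (2 * (n + (a + 1))) j : ℝ) * t ^ (2 * (n + (a + 1))) / (Nat.factorial (2 * (n + (a + 1))) : ℝ)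
          = t ^ j * (t ^ (2 * n + 1) / (Nat.factorial (2 * n + 1) : ℝ))
      rw [hpow, mul_div_assoc' (t ^ j), div_eq_div_iff hfacpos2.ne' hfacpos.ne', ← hfac]
      ring
    have hzero : ∀ i ∈ range (a + 1), f i = 0 := by
      intro i hi
      have hlt : 2 * i < j := by have := Finset.mem_range.1 hi; omega
      simp [hf, Nat.descFactorial_eq_zero_iff_lt.2 hlt]
    have hsinh : HasSum (fun n : ℕ => f (n + (a + 1))) (t ^ j * Real.sinh t) := by
      have h := (Real.hasSum_sinh t).mul_left (t ^ j)
      rw [funext hshift]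
      exact h
    have hfin : HasSum f (t ^ j * Real.sinh t) := by
      have h2 := (hasSum_nat_add_iff (f := f) (a + 1)).1 hsinh
      rwa [Finset.sum_eq_zero hzero, add_zero] at h2
    rw [if_neg (by simp [Nat.even_iff, ha, Nat.add_mod])]
    exact hfin

set_option maxHeartbeats 1000000 in
theorem series_asymptotic (k : ℕ) (hk : 1 ≤ k) :
    ∃ M x₀ : ℝ, 0 < M ∧ 0 < x₀ ∧ ∀ x : ℝ, x₀ ≤ x →
      |(∑' n : ℕ, (n : ℝ) ^ (2 * k) * x ^ n / (Nat.factorial (2 * n) : ℝ))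
          - x ^ k * Real.exp (Real.sqrt x) / 2 ^ (2 * k + 1)|
        ≤ M * x ^ k * Real.exp (Real.sqrt x) / Real.sqrt x := by
  obtain ⟨c, hc1, hc0, hcsum⟩ := stirling_decomp (2 * k)
  set M : ℝ := 1 + ∑ j ∈ Finset.range (2 * k), (c j : ℝ) with hM
  have hMpos : 0 < M := by positivity
  refine ⟨M, 1, hMpos, one_pos, fun x hx => ?_⟩
  set t := Real.sqrt x with ht
  have hx0 : (0:ℝ) ≤ x := le_trans zero_le_one hx
  have ht1 : 1 ≤ t := by
    rw [ht, show (1:ℝ) = Real.sqrt 1 from (Real.sqrt_one).symm]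
    exact Real.sqrt_le_sqrt hx
  have ht0 : 0 < t := lt_of_lt_of_le one_pos ht1
  have htx : t ^ 2 = x := Real.sq_sqrt hx0
  set g : ℕ → ℝ := fun j => t ^ j * (if Even j then Real.cosh t else Real.sinh t) with hg
  -- HasSum for the main series
  have hS : HasSum (fun n : ℕ => (n : ℝ) ^ (2 * k) * x ^ n / (Nat.factorial (2 * n) : ℝ))
      (∑ j ∈ Finset.range (2 * k + 1), (c j : ℝ) / 4 ^ k * g j) := by
    have hsum : HasSum (fun n : ℕ => ∑ j ∈ Finset.range (2 * k + 1),
        (c j : ℝ) / 4 ^ k * ((Nat.descFactorial (2 * n) j : ℝ) * t ^ (2 * n) / (Nat.factorial (2 * n) : ℝ)))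
        (∑ j ∈ Finset.range (2 * k + 1), (c j : ℝ) / 4 ^ k * g j) :=
      hasSum_sum fun j _ => (hasSum_aux t j).mul_left _
    refine hsum.congr_fun fun n => ?_
    have h3 : x ^ n = t ^ (2 * n) := by rw [← htx, ← pow_mul]
    have h1 : ((2 * n : ℕ) : ℝ) ^ (2 * k)
        = ∑ j ∈ Finset.range (2 * k + 1), (c j : ℝ) * (Nat.descFactorial (2 * n) j : ℝ) := by
      have := congrArg (Nat.cast (R := ℝ)) (hcsum (2 * n))
      push_cast at this ⊢
      exact this
    have h2 : (n : ℝ) ^ (2 * k)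
        = (∑ j ∈ Finset.range (2 * k + 1), (c j : ℝ) * (Nat.descFactorial (2 * n) j : ℝ)) / 4 ^ k := by
      rw [← h1]
      push_cast
      rw [mul_pow, show (2:ℝ) ^ (2 * k) = 4 ^ k by rw [pow_mul]; norm_num]
      field_simp
    rw [h3, h2, Finset.sum_div, Finset.sum_mul, Finset.sum_div]
    refine Finset.sum_congr rfl fun j _ => ?_
    ring
  -- split off the top term
  have hsplit : (∑ j ∈ Finset.range (2 * k + 1), (c j : ℝ) / 4 ^ k * g j)
      = (∑ j ∈ Finset.range (2 * k), (c j : ℝ) / 4 ^ k * g j) + (1 / 4 ^ k) * (t ^ (2 * k) * Real.cosh t) := by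
    rw [Finset.sum_range_succ, hc1, hg]
    simp [even_two_mul]
  set R : ℝ := ∑ j ∈ Finset.range (2 * k), (c j : ℝ) / 4 ^ k * g j with hR
  have hts : (∑' n : ℕ, (n : ℝ) ^ (2 * k) * x ^ n / (Nat.factorial (2 * n) : ℝ))
      = R + (1 / 4 ^ k) * (t ^ (2 * k) * Real.cosh t) := by
    rw [hS.tsum_eq, hsplit]
  set B : ℝ := t ^ (2 * k - 1) * Real.exp t with hB
  have hBpos : 0 < B := by positivity
  have h2k : 2 * k = (2 * k - 1) + 1 := by omega
  have h4 : (1:ℝ) ≤ 4 ^ k := by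
    calc (1:ℝ) = 1 ^ k := (one_pow k).symm
    _ ≤ 4 ^ k := pow_le_pow_left₀ (by norm_num) (by norm_num) k
  have hR0 : 0 ≤ R := by
    refine Finset.sum_nonneg fun j _ => ?_
    have : 0 ≤ g j := by
      rw [hg]
      have : (0:ℝ) ≤ if Even j then Real.cosh t else Real.sinh t := by
        split
        · exact (Real.cosh_pos (x := t)).le
        · exact Real.sinh_nonneg_iff.2 ht0.le
      positivity
    positivity
  have hRle : R ≤ (M - 1) * B := by
    have hb : ∀ j ∈ Finset.range (2 * k), (c j : ℝ) / 4 ^ k * g j ≤ (c j : ℝ) * B := by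
      intro j hj
      have hj' : j ≤ 2 * k - 1 := by have := Finset.mem_range.1 hj; omega
      have hif : (0:ℝ) ≤ if Even j then Real.cosh t else Real.sinh t := by
        split
        · exact (Real.cosh_pos (x := t)).le
        · exact Real.sinh_nonneg_iff.2 ht0.le
      have hgj : g j ≤ B := by
        rw [hg, hB]
        have h1 : t ^ j ≤ t ^ (2 * k - 1) := pow_le_pow_right₀ ht1 hj'
        have h2 : (if Even j then Real.cosh t else Real.sinh t) ≤ Real.exp t := by
          have he : Real.exp (-t) ≤ Real.exp t := Real.exp_le_exp.2 (by linarith)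
          split
          · rw [Real.cosh_eq]; linarith
          · rw [Real.sinh_eq]; nlinarith [Real.exp_pos (-t)]
        exact mul_le_mul h1 h2 hif (by positivity)
      have hcd : (c j : ℝ) / 4 ^ k ≤ (c j : ℝ) := div_le_self (by positivity) h4
      have hg0 : 0 ≤ g j := by
        rw [hg]; positivity
      exact mul_le_mul hcd hgj hg0 (by positivity)
    calc R ≤ ∑ j ∈ Finset.range (2 * k), (c j : ℝ) * B := Finset.sum_le_sum hb
    _ = (∑ j ∈ Finset.range (2 * k), (c j : ℝ)) * B := (Finset.sum_mul _ _ _).symm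
    _ = (M - 1) * B := by rw [hM]; ring
  have hE : t ^ (2 * k) * Real.exp (-t) / (2 * 4 ^ k) ≤ B := by
    have hte : t * Real.exp (-t) ≤ Real.exp t := by
      have h1 : t ≤ Real.exp t := by linarith [Real.add_one_le_exp t]
      have h2 : Real.exp (-t) ≤ 1 := Real.exp_le_one_iff.2 (by linarith)
      nlinarith [Real.exp_pos t, Real.exp_pos (-t)]
    have hnum : (0:ℝ) ≤ t ^ (2 * k) * Real.exp (-t) := by positivity
    have hd : t ^ (2 * k) * Real.exp (-t) / (2 * 4 ^ k) ≤ t ^ (2 * k) * Real.exp (-t) :=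
      div_le_self hnum (by linarith)
    have hst : t ^ (2 * k) * Real.exp (-t) ≤ B := by
      rw [h2k, pow_succ, hB]
      have := mul_le_mul_of_nonneg_left hte (pow_nonneg ht0.le (2 * k - 1))
      nlinarith [this]
    linarith
  have hxk : x ^ k = t ^ (2 * k) := by rw [← htx, ← pow_mul, mul_comm 2 k]
  have hp2 : (2:ℝ) ^ (2 * k + 1) = 2 * 4 ^ k := by
    rw [pow_succ, show (2:ℝ) ^ (2 * k) = 4 ^ k from by rw [pow_mul]; norm_num]
    ring
  have hch : (1 / 4 ^ k) * (t ^ (2 * k) * Real.cosh t) - t ^ (2 * k) * Real.exp t / (2 * 4 ^ k)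
      = t ^ (2 * k) * Real.exp (-t) / (2 * 4 ^ k) := by
    rw [Real.cosh_eq]
    have h40 : (0:ℝ) < 4 ^ k := by positivity
    field_simp
    ring
  have hgoalrhs : M * x ^ k * Real.exp t / t = M * B := by
    rw [hxk, h2k, pow_succ, hB]
    field_simp
  rw [hts, hgoalrhs, hxk, hp2]
  have hDnn : 0 ≤ R + 1 / 4 ^ k * (t ^ (2 * k) * Real.cosh t) - t ^ (2 * k) * Real.exp t / (2 * 4 ^ k) := by
    rw [show R + 1 / 4 ^ k * (t ^ (2 * k) * Real.cosh t) - t ^ (2 * k) * Real.exp t / (2 * 4 ^ k)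
      = R + (1 / 4 ^ k * (t ^ (2 * k) * Real.cosh t) - t ^ (2 * k) * Real.exp t / (2 * 4 ^ k)) from by ring,
      hch]
    have : (0:ℝ) ≤ t ^ (2 * k) * Real.exp (-t) / (2 * 4 ^ k) := by positivity
    linarith
  rw [abs_of_nonneg hDnn]
  have : R + 1 / 4 ^ k * (t ^ (2 * k) * Real.cosh t) - t ^ (2 * k) * Real.exp t / (2 * 4 ^ k)
      = R + t ^ (2 * k) * Real.exp (-t) / (2 * 4 ^ k) := by linarith [hch]
  rw [this]
  nlinarith [hRle, hE, hBpos]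
end

section
/- Let (X, Y) be bivariate normal with zero means, unit variances and correlation ρ ∈ (−1,1). Then the product Z = XY has probability density f(x) = (1/(π√(1−ρ²))) exp(ρx/(1−ρ²)) K₀(|x|/(1−ρ²)) for x ≠ 0, where K₀ is the modified Bessel function of the second kind of order 0. -/
open MeasureTheory ProbabilityTheory Real

/-- The modified Bessel function of the second kind,
`K_ν(x) = ∫_0^∞ e^{−x cosh t} cosh(νt) dt`. -/
noncomputable def besselK (ν x : ℝ) : ℝ :=
  ∫ t in Set.Ioi (0 : ℝ), Real.exp (-x * Real.cosh t) * Real.cosh (ν * t)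

open Set
open scoped ENNReal NNReal

lemma lintegral_image_eq_lintegral_abs_deriv_mul' {s : Set ℝ} {f f' : ℝ → ℝ}
    (hs : MeasurableSet s) (hf' : ∀ x ∈ s, HasDerivWithinAt f (f' x) s x)
    (hf : InjOn f s) (g : ℝ → ℝ≥0∞) :
    ∫⁻ x in f '' s, g x = ∫⁻ x in s, ENNReal.ofReal |f' x| * g (f x) := by
  simpa only [ContinuousLinearMap.det_toSpanSingleton] using
    lintegral_image_eq_lintegral_abs_det_fderiv_mul volume hs
      (fun x hx => (hf' x hx).hasFDerivWithinAt) hf g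

-- reflection
lemma lintegral_Iio_eq_neg (g : ℝ → ℝ≥0∞) :
    ∫⁻ x in Iio (0:ℝ), g x = ∫⁻ x in Ioi (0:ℝ), g (-x) := by
  have h := lintegral_image_eq_lintegral_abs_deriv_mul' (s := Ioi (0:ℝ))
    (f := fun x => -x) (f' := fun _ => (-1 : ℝ)) measurableSet_Ioi
    (fun x _ => (hasDerivAt_neg x).hasDerivWithinAt) (fun a _ b _ h => by simpa using h) g
  simpa [Set.image_neg_eq_neg, abs_of_nonneg] using h

lemma lintegral_even_eq (g : ℝ → ℝ≥0∞) (hg : ∀ x, g (-x) = g x) :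
    ∫⁻ x, g x = 2 * ∫⁻ x in Ioi (0:ℝ), g x := by
  have h1 : ∫⁻ x, g x = (∫⁻ x in Iio (0:ℝ), g x) + ∫⁻ x in Ici (0:ℝ), g x := by
    rw [← lintegral_add_compl g measurableSet_Iio, compl_Iio]
  have h2 : ∫⁻ x in Ici (0:ℝ), g x = ∫⁻ x in Ioi (0:ℝ), g x :=
    (setLIntegral_congr (Ioi_ae_eq_Ici (a := (0:ℝ))).symm)
  rw [h1, h2, lintegral_Iio_eq_neg g]
  simp only [hg]
  ring


lemma self_le_cosh {t : ℝ} (ht : 0 ≤ t) : t ≤ Real.cosh t :=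
  le_trans (Real.self_le_sinh_iff.mpr ht) (by
    rw [Real.sinh_eq, Real.cosh_eq]
    have := Real.exp_pos (-t)
    linarith)

lemma integrableOn_exp_cosh {c : ℝ} (hc : 0 < c) :
    IntegrableOn (fun t => Real.exp (-(c * Real.cosh t))) (Ioi (0:ℝ)) := by
  refine Integrable.mono' (g := fun t => Real.exp (-c * t)) (exp_neg_integrableOn_Ioi 0 hc)
    (Continuous.aestronglyMeasurable (by continuity)) ?_
  filter_upwards [ae_restrict_mem measurableSet_Ioi] with t ht
  rw [Real.norm_eq_abs, abs_of_pos (Real.exp_pos _), Real.exp_le_exp]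
  have := self_le_cosh (le_of_lt ht)
  nlinarith

lemma besselK_zero_eq (c : ℝ) :
    besselK 0 c = ∫ t in Ioi (0:ℝ), Real.exp (-(c * Real.cosh t)) := by
  unfold besselK
  simp [neg_mul]

lemma besselK_zero_nonneg (c : ℝ) : 0 ≤ besselK 0 c := by
  rw [besselK_zero_eq]
  exact setIntegral_nonneg measurableSet_Ioi fun t _ => (Real.exp_pos _).le

lemma ofReal_besselK_zero {c : ℝ} (hc : 0 < c) :
    ENNReal.ofReal (besselK 0 c) = ∫⁻ t in Ioi (0:ℝ), ENNReal.ofReal (Real.exp (-(c * Real.cosh t))) := by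
  rw [besselK_zero_eq, ofReal_integral_eq_lintegral_ofReal (integrableOn_exp_cosh hc)
    (ae_of_all _ fun t => (Real.exp_pos _).le)]

lemma step1 {z s2 : ℝ} (hz : z ≠ 0) (hs2 : 0 < s2) :
    ∫⁻ u in Ioi (0:ℝ), ENNReal.ofReal (u⁻¹ * Real.exp (-((u^2 + z^2/u^2)/(2*s2))))
      = ∫⁻ t, ENNReal.ofReal ((1/2) * Real.exp (-(|z|/s2 * Real.cosh t))) := by
  have hza : (0:ℝ) < |z| := abs_pos.mpr hz
  have ha : (0:ℝ) < Real.sqrt |z| := Real.sqrt_pos.mpr hza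
  set a := Real.sqrt |z| with ha_def
  have ha2 : a ^ 2 = |z| := Real.sq_sqrt hza.le
  set f : ℝ → ℝ := fun t => a * Real.exp (t/2) with hf_def
  have himg : f '' univ = Ioi (0:ℝ) := by
    ext y
    simp only [image_univ, mem_range, mem_Ioi]
    constructor
    · rintro ⟨t, rfl⟩; exact mul_pos ha (Real.exp_pos _)
    · intro hy
      refine ⟨2 * Real.log (y / a), ?_⟩
      simp only [hf_def]
      rw [show (2 * Real.log (y / a)) / 2 = Real.log (y / a) by ring,
        Real.exp_log (div_pos hy ha)]
      field_simp
  have hderiv : ∀ x ∈ (univ : Set ℝ),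
      HasDerivWithinAt f (a * (Real.exp (x/2) * (1/2))) univ x := by
    intro x _
    exact (((hasDerivAt_id x).div_const 2).exp.const_mul a).hasDerivWithinAt
  have hinj : InjOn f univ := by
    intro x _ y _ hxy
    have := mul_left_cancel₀ (ne_of_gt ha) hxy
    have := Real.exp_injective this
    linarith
  have h := lintegral_image_eq_lintegral_abs_deriv_mul' (f := f)
    (f' := fun x => a * (Real.exp (x/2) * (1/2))) MeasurableSet.univ hderiv hinj
    (fun u => ENNReal.ofReal (u⁻¹ * Real.exp (-((u^2 + z^2/u^2)/(2*s2)))))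
  rw [himg] at h
  rw [h, Measure.restrict_univ]
  refine lintegral_congr fun t => ?_
  have hft : (0:ℝ) < f t := mul_pos ha (Real.exp_pos _)
  rw [← ENNReal.ofReal_mul (abs_nonneg _)]
  congr 1
  have he2 : Real.exp (t/2) ^ 2 = Real.exp t := by
    rw [sq, ← Real.exp_add]; ring_nf
  have hf2 : f t ^ 2 = |z| * Real.exp t := by
    simp only [hf_def]; rw [mul_pow, ha2, he2]
  rw [abs_of_pos (by positivity : (0:ℝ) < a * (Real.exp (t/2) * (1/2)))]
  have harg : -((f t ^ 2 + z ^ 2 / f t ^ 2) / (2 * s2)) = -(|z|/s2 * Real.cosh t) := by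
    rw [hf2, ← sq_abs z, Real.cosh_eq, Real.exp_neg]
    have h1 : Real.exp t ≠ 0 := Real.exp_ne_zero t
    field_simp
  rw [harg]
  rw [show a * (Real.exp (t/2) * (1/2)) = f t * (1/2) from by simp only [hf_def]; ring]
  field_simp

lemma stepJ {z s2 : ℝ} (hz : z ≠ 0) (hs2 : 0 < s2) :
    ∫⁻ u, ENNReal.ofReal (|u|⁻¹ * Real.exp (-((u^2 + z^2/u^2)/(2*s2))))
      = 2 * ENNReal.ofReal (besselK 0 (|z|/s2)) := by
  have hc : 0 < |z|/s2 := div_pos (abs_pos.mpr hz) hs2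
  rw [lintegral_even_eq _ (fun x => by rw [abs_neg, neg_pow]; ring_nf)]
  have h0 : ∫⁻ u in Ioi (0:ℝ), ENNReal.ofReal (|u|⁻¹ * Real.exp (-((u^2 + z^2/u^2)/(2*s2))))
      = ∫⁻ u in Ioi (0:ℝ), ENNReal.ofReal (u⁻¹ * Real.exp (-((u^2 + z^2/u^2)/(2*s2)))) := by
    refine setLIntegral_congr_fun measurableSet_Ioi (fun u hu => ?_)
    rw [abs_of_pos hu]
  rw [h0, step1 hz hs2,
    lintegral_even_eq _ (fun t => by rw [Real.cosh_neg]),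
    ofReal_besselK_zero hc]
  have hhalf : ∀ t : ℝ, ENNReal.ofReal ((1:ℝ)/2 * Real.exp (-(|z|/s2 * Real.cosh t)))
      = ENNReal.ofReal ((1:ℝ)/2) * ENNReal.ofReal (Real.exp (-(|z|/s2 * Real.cosh t))) :=
    fun t => ENNReal.ofReal_mul (by norm_num)
  simp only [hhalf]
  rw [lintegral_const_mul' _ _ ENNReal.ofReal_ne_top]
  rw [show ENNReal.ofReal ((1:ℝ)/2) = 2⁻¹ by
    rw [one_div, ENNReal.ofReal_inv_of_pos two_pos, ENNReal.ofReal_ofNat]]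
  rw [← mul_assoc, ← mul_assoc]
  congr 1
  rw [mul_assoc, ENNReal.mul_inv_cancel (by norm_num) (by norm_num), mul_one]
lemma pdf_product {ρ : ℝ} (hρ : ρ ∈ Set.Ioo (-1:ℝ) 1) {u : ℝ} (hu : u ≠ 0) (z : ℝ)
    (v : ℝ≥0) (hv : (v:ℝ) = u^2*(1-ρ^2)) :
    gaussianPDFReal 0 1 u * gaussianPDFReal (ρ*u^2) v z
      = ((2*π*Real.sqrt (1-ρ^2))⁻¹ * Real.exp (ρ*z/(1-ρ^2))) *
        (|u|⁻¹ * Real.exp (-((u^2 + z^2/u^2)/(2*(1-ρ^2))))) := by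
  have hs2 : (0:ℝ) < 1-ρ^2 := by nlinarith [hρ.1, hρ.2]
  have hs : (0:ℝ) < Real.sqrt (1-ρ^2) := Real.sqrt_pos.mpr hs2
  have hss : Real.sqrt (1-ρ^2)^2 = 1-ρ^2 := Real.sq_sqrt hs2.le
  have h2π : Real.sqrt (2*π) ^ 2 = 2*π := Real.sq_sqrt (by positivity)
  have h2πpos : (0:ℝ) < Real.sqrt (2*π) := Real.sqrt_pos.mpr (by positivity)
  unfold gaussianPDFReal
  rw [hv]
  rw [show Real.sqrt (2*π*(u^2*(1-ρ^2))) = Real.sqrt (2*π) * (|u| * Real.sqrt (1-ρ^2)) by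
    rw [Real.sqrt_mul (by positivity), Real.sqrt_mul (sq_nonneg u), Real.sqrt_sq_eq_abs]]
  rw [NNReal.coe_one, mul_one, mul_mul_mul_comm,
    mul_mul_mul_comm ((2*π*Real.sqrt (1-ρ^2))⁻¹), ← Real.exp_add, ← Real.exp_add]
  have habs : |u| ≠ 0 := abs_ne_zero.mpr hu
  congr 1
  · rw [show (2*π*Real.sqrt (1-ρ^2)) = (Real.sqrt (2*π)*Real.sqrt (2*π))*Real.sqrt (1-ρ^2) by
      linear_combination (-Real.sqrt (1-ρ^2)) * h2π]
    simp only [mul_inv]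
    ring
  · congr 1
    have hu2 : u^2 ≠ 0 := pow_ne_zero 2 hu
    rw [← sq_abs u]
    field_simp
    linear_combination (|u|^2*(1-ρ^2)) * sq_abs u

lemma ae_ne_zero : ∀ᵐ u : ℝ ∂volume, u ≠ 0 := by
  rw [ae_iff]
  simp only [ne_eq, not_not, Set.setOf_eq_eq_singleton]
  exact measure_singleton 0

lemma Fz {ρ : ℝ} (hρ : ρ ∈ Set.Ioo (-1:ℝ) 1) {z : ℝ} (hz : z ≠ 0) :
    ∫⁻ u, gaussianPDF 0 1 u
        * gaussianPDF (ρ*u^2) (NNReal.mk ((u*Real.sqrt (1-ρ^2))^2) (sq_nonneg _)) z ∂volume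
      = ENNReal.ofReal ((1 / (π * Real.sqrt (1-ρ^2))) * Real.exp (ρ * z / (1 - ρ^2))
          * besselK 0 (|z| / (1-ρ^2))) := by
  have hs2 : (0:ℝ) < 1-ρ^2 := by nlinarith [hρ.1, hρ.2]
  have hs : (0:ℝ) < Real.sqrt (1-ρ^2) := Real.sqrt_pos.mpr hs2
  set C : ℝ := (2*π*Real.sqrt (1-ρ^2))⁻¹ * Real.exp (ρ*z/(1-ρ^2)) with hC
  have hCpos : 0 < C := by positivity
  have hcongr : ∀ᵐ u : ℝ ∂volume,
      gaussianPDF 0 1 u * gaussianPDF (ρ*u^2) (NNReal.mk ((u*Real.sqrt (1-ρ^2))^2) (sq_nonneg _)) z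
      = ENNReal.ofReal C
          * ENNReal.ofReal (|u|⁻¹ * Real.exp (-((u^2 + z^2/u^2)/(2*(1-ρ^2))))) := by
    filter_upwards [ae_ne_zero] with u hu
    rw [gaussianPDF_def, gaussianPDF_def, ← ENNReal.ofReal_mul (gaussianPDFReal_nonneg _ _ _),
      pdf_product hρ hu z _ (by
        rw [NNReal.coe_mk, mul_pow, Real.sq_sqrt hs2.le]),
      ENNReal.ofReal_mul hCpos.le]
  rw [lintegral_congr_ae hcongr, lintegral_const_mul' _ _ ENNReal.ofReal_ne_top, stepJ hz hs2]
  rw [← mul_assoc, mul_comm (ENNReal.ofReal C) 2,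
    show (2:ℝ≥0∞) = ENNReal.ofReal 2 from (ENNReal.ofReal_ofNat 2).symm,
    ← ENNReal.ofReal_mul (by norm_num), ← ENNReal.ofReal_mul (by positivity)]
  congr 1
  rw [hC]
  have hπ : (π:ℝ) ≠ 0 := Real.pi_ne_zero
  field_simp


theorem product_normal_zero_mean_density {Ω : Type*} [MeasureSpace Ω]
    [IsProbabilityMeasure (ℙ : Measure Ω)]
    (U V : Ω → ℝ) (hUV : IndepFun U V ℙ)
    (hU : Measure.map U ℙ = gaussianReal 0 1) (hV : Measure.map V ℙ = gaussianReal 0 1)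
    (ρ : ℝ) (hρ : ρ ∈ Set.Ioo (-1 : ℝ) 1) :
    Measure.map (fun ω => U ω * (ρ * U ω + Real.sqrt (1 - ρ ^ 2) * V ω)) ℙ
      = volume.withDensity (fun x => ENNReal.ofReal
          ((1 / (π * Real.sqrt (1 - ρ ^ 2))) * Real.exp (ρ * x / (1 - ρ ^ 2))
            * besselK 0 (|x| / (1 - ρ ^ 2)))) := by
  obtain ⟨hρ1, hρ2⟩ := hρ
  have hs2 : (0:ℝ) < 1 - ρ^2 := by nlinarith
  have hs : (0:ℝ) < Real.sqrt (1 - ρ^2) := Real.sqrt_pos.mpr hs2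
  have hUm : AEMeasurable U ℙ := by
    by_contra h
    rw [Measure.map_of_not_aemeasurable h] at hU
    have := congrArg (fun m : Measure ℝ => m Set.univ) hU
    simp at this
  have hVm : AEMeasurable V ℙ := by
    by_contra h
    rw [Measure.map_of_not_aemeasurable h] at hV
    have := congrArg (fun m : Measure ℝ => m Set.univ) hV
    simp at this
  have hpair : Measure.map (fun ω => (U ω, V ω)) ℙ
      = (gaussianReal 0 1).prod (gaussianReal 0 1) := by
    have h := (indepFun_iff_map_prod_eq_prod_map_map hUm hVm).mp hUV
    rw [hU, hV] at h
    exact h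
  set G : ℝ × ℝ → ℝ := fun q => q.1 * (ρ * q.1 + Real.sqrt (1 - ρ^2) * q.2) with hG
  have hGm : Measurable G := by fun_prop
  have hmap : Measure.map (fun ω => U ω * (ρ * U ω + Real.sqrt (1 - ρ ^ 2) * V ω)) ℙ
      = ((gaussianReal 0 1).prod (gaussianReal 0 1)).map G := by
    rw [← hpair, AEMeasurable.map_map_of_aemeasurable hGm.aemeasurable (hUm.prodMk hVm)]
    rfl
  rw [hmap]
  have hμ_ae : ∀ᵐ u : ℝ ∂(gaussianReal 0 1), u ≠ 0 := by
    rw [ae_iff]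
    simp only [ne_eq, not_not, Set.setOf_eq_eq_singleton]
    exact (gaussianReal_absolutelyContinuous 0 one_ne_zero) (measure_singleton 0)
  have hp : Measurable (Function.uncurry (fun (u z : ℝ) =>
      gaussianPDF (ρ*u^2) (NNReal.mk ((u*Real.sqrt (1-ρ^2))^2) (sq_nonneg _)) z)) := by
    have heq : Function.uncurry (fun (u z : ℝ) =>
        gaussianPDF (ρ*u^2) (NNReal.mk ((u*Real.sqrt (1-ρ^2))^2) (sq_nonneg _)) z)
        = fun q : ℝ × ℝ => ENNReal.ofReal ((Real.sqrt (2*π*((q.1*Real.sqrt (1-ρ^2))^2)))⁻¹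
          * Real.exp (-(q.2 - ρ*q.1^2)^2 / (2*((q.1*Real.sqrt (1-ρ^2))^2)))) := by
      funext q
      simp only [Function.uncurry, gaussianPDF_def, gaussianPDFReal, NNReal.coe_mk]
    rw [heq]
    refine Measurable.ennreal_ofReal (Measurable.mul ?_ ?_)
    · exact (measurable_fst.mul_const _).pow_const 2 |>.const_mul (2*π) |>.sqrt.inv
    · exact (((measurable_snd.sub ((measurable_fst.pow_const 2).const_mul ρ)).pow_const 2).neg.div
        (((measurable_fst.mul_const _).pow_const 2).const_mul 2)).exp
  ext A hA
  rw [Measure.map_apply hGm hA, withDensity_apply _ hA, Measure.prod_apply (hGm hA)]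
  have hker : ∀ u : ℝ, u ≠ 0 → (gaussianReal 0 1) (Prod.mk u ⁻¹' (G ⁻¹' A))
      = ∫⁻ z in A, gaussianPDF (ρ*u^2) (NNReal.mk ((u*Real.sqrt (1-ρ^2))^2) (sq_nonneg _)) z := by
    intro u hu
    have hvar : (NNReal.mk ((u*Real.sqrt (1-ρ^2))^2) (sq_nonneg _) : ℝ≥0) ≠ 0 := by
      intro h
      have := congrArg NNReal.toReal h
      simp only [NNReal.coe_mk, NNReal.coe_zero] at this
      exact pow_ne_zero 2 (mul_ne_zero hu hs.ne') this
    have h1 : Prod.mk u ⁻¹' (G ⁻¹' A) = (fun v : ℝ => (u * Real.sqrt (1-ρ^2)) * v + ρ*u^2) ⁻¹' A := by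
      rw [show Prod.mk u ⁻¹' (G ⁻¹' A) = (fun v : ℝ => G (u, v)) ⁻¹' A from rfl]
      congr 1
      funext v
      simp only [hG]
      ring
    rw [h1,
      show (fun v : ℝ => (u * Real.sqrt (1-ρ^2)) * v + ρ*u^2)
        = (fun x : ℝ => x + ρ*u^2) ∘ (fun v : ℝ => (u * Real.sqrt (1-ρ^2)) * v) from rfl,
      ← Measure.map_apply (by fun_prop) hA,
      ← Measure.map_map (by fun_prop) (by fun_prop)]
    rw [show (fun v : ℝ => (u * Real.sqrt (1-ρ^2)) * v) = ((u * Real.sqrt (1-ρ^2)) * ·) from rfl,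
      gaussianReal_map_const_mul,
      show (fun x : ℝ => x + ρ*u^2) = (· + ρ*u^2) from rfl,
      gaussianReal_map_add_const]
    simp only [mul_zero, zero_add, mul_one]
    rw [gaussianReal_apply _ hvar A]
  calc ∫⁻ u, (gaussianReal 0 1) (Prod.mk u ⁻¹' (G ⁻¹' A)) ∂(gaussianReal 0 1)
      = ∫⁻ u, (∫⁻ z in A, gaussianPDF (ρ*u^2) (NNReal.mk ((u*Real.sqrt (1-ρ^2))^2) (sq_nonneg _)) z)
          ∂(gaussianReal 0 1) := by
        refine lintegral_congr_ae ?_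
        filter_upwards [hμ_ae] with u hu
        exact hker u hu
    _ = ∫⁻ u, gaussianPDF 0 1 u
          * (∫⁻ z in A, gaussianPDF (ρ*u^2) (NNReal.mk ((u*Real.sqrt (1-ρ^2))^2) (sq_nonneg _)) z)
          ∂volume := by
        have hH : Measurable (fun u : ℝ => ∫⁻ z in A,
            gaussianPDF (ρ*u^2) (NNReal.mk ((u*Real.sqrt (1-ρ^2))^2) (sq_nonneg _)) z) :=
          hp.lintegral_prod_right'
        rw [gaussianReal_of_var_ne_zero 0 one_ne_zero,
          lintegral_withDensity_eq_lintegral_mul volume (measurable_gaussianPDF 0 1) hH]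
        simp only [Pi.mul_apply]
    _ = ∫⁻ u, ∫⁻ z in A, gaussianPDF 0 1 u
          * gaussianPDF (ρ*u^2) (NNReal.mk ((u*Real.sqrt (1-ρ^2))^2) (sq_nonneg _)) z ∂volume := by
        refine lintegral_congr fun u => ?_
        rw [lintegral_const_mul' _ _ (by simp [gaussianPDF_def])]
    _ = ∫⁻ z in A, ∫⁻ u, gaussianPDF 0 1 u
          * gaussianPDF (ρ*u^2) (NNReal.mk ((u*Real.sqrt (1-ρ^2))^2) (sq_nonneg _)) z ∂volume ∂volume := by
        exact lintegral_lintegral_swap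
          (((measurable_gaussianPDF 0 1).comp measurable_fst).mul hp).aemeasurable
    _ = ∫⁻ z in A, ENNReal.ofReal
          ((1 / (π * Real.sqrt (1 - ρ ^ 2))) * Real.exp (ρ * z / (1 - ρ ^ 2))
            * besselK 0 (|z| / (1 - ρ ^ 2))) := by
        refine lintegral_congr_ae (ae_restrict_of_ae ?_)
        filter_upwards [ae_ne_zero] with z hz0
        exact Fz ⟨hρ1, hρ2⟩ hz0
end

section
/- Let X ~ N(μ_X, 1) and Y ~ N(0, 1) be independent. Then the product Z = XY has density f(x) = (1/π) e^{−μ_X²/2} ∑_{n=0}^∞ [μ_X^{2n} |x|^n / (2n)!] K_n(|x|) for x ≠ 0, where K_n is the modified Bessel function of the second kind of order n. -/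
open MeasureTheory ProbabilityTheory Real Set
open scoped ENNReal NNReal

-- L0
lemma integrable_exp_lin_quad {b : ℝ} (hb : 0 < b) (c : ℝ) :
    Integrable fun t : ℝ => rexp (c * t - b * t ^ 2) := by
  have h : ∀ t : ℝ, c * t - b * t ^ 2 = c ^ 2 / (4 * b) + -b * (t - c / (2 * b)) ^ 2 := by
    intro t; field_simp; ring
  have : (fun t : ℝ => rexp (c * t - b * t ^ 2))
      = fun t => rexp (c ^ 2 / (4 * b)) * rexp (-b * (t - c / (2 * b)) ^ 2) := by
    funext t; rw [← Real.exp_add, ← h]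
  rw [this]
  exact (Integrable.comp_sub_right (integrable_exp_neg_mul_sq hb) _).const_mul _

lemma sq_div_two_le_cosh (t : ℝ) : t ^ 2 / 2 ≤ Real.cosh t := by
  have h := sum_le_hasSum {1} (fun i _ => div_nonneg ((even_two_mul i).pow_nonneg _) (by positivity)) (Real.hasSum_cosh t)
  simpa using h

-- B1
lemma integrable_exp_lin_cosh {a : ℝ} (ha : 0 < a) {b : ℝ} (hb : b ≠ 0) (c : ℝ) :
    Integrable fun t : ℝ => rexp (c * t - a * Real.cosh (b * t)) := by
  have hb2 : 0 < a * b ^ 2 / 2 := by positivity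
  refine (integrable_exp_lin_quad hb2 c).mono ?_ (ae_of_all _ fun t => ?_)
  · exact (Continuous.aestronglyMeasurable (by continuity))
  · rw [Real.norm_eq_abs, Real.norm_eq_abs, abs_of_nonneg (Real.exp_nonneg _),
      abs_of_nonneg (Real.exp_nonneg _)]
    apply Real.exp_le_exp.mpr
    have h1 : (b * t) ^ 2 / 2 ≤ Real.cosh (b * t) := sq_div_two_le_cosh _
    nlinarith [Real.cosh_pos (b * t)]

-- cosh ≤ exp |x|
lemma cosh_le_exp_abs (x : ℝ) : Real.cosh x ≤ rexp |x| := by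
  rw [Real.cosh_eq]
  have h1 : rexp x ≤ rexp |x| := Real.exp_le_exp.mpr (le_abs_self x)
  have h2 : rexp (-x) ≤ rexp |x| := Real.exp_le_exp.mpr (neg_le_abs x)
  linarith

-- M1
lemma mul_exp_neg_mul_sq_le {b : ℝ} (hb : 0 < b) {u : ℝ} (hu : 0 ≤ u) :
    u * rexp (-b * u ^ 2) ≤ (√b)⁻¹ := by
  have hsb : 0 < √b := Real.sqrt_pos.mpr hb
  rcases le_or_gt u (√b)⁻¹ with h | h
  · calc u * rexp (-b * u ^ 2) ≤ u * 1 := by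
          refine mul_le_mul_of_nonneg_left ?_ hu
          exact Real.exp_le_one_iff.mpr (by nlinarith)
      _ ≤ (√b)⁻¹ := by linarith
  · have hbu : b * u ^ 2 = (√b * u) ^ 2 := by
      rw [mul_pow, Real.sq_sqrt hb.le]
    have h1 : 1 ≤ √b * u := by
      have : √b * (√b)⁻¹ = 1 := by field_simp
      nlinarith
    have h2 : √b * u ≤ rexp (b * u ^ 2) := by
      rw [hbu]
      have := Real.add_one_le_exp ((√b * u) ^ 2)
      nlinarith
    rw [neg_mul, Real.exp_neg]
    have h3 : u * (rexp (b * u ^ 2))⁻¹ ≤ u * (√b * u)⁻¹ := by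
      refine mul_le_mul_of_nonneg_left ?_ hu
      exact inv_anti₀ (by nlinarith) h2
    have h4 : u * (√b * u)⁻¹ = (√b)⁻¹ := by
      rw [mul_inv]
      field_simp
      exact mul_inv_cancel₀ (ne_of_gt (lt_trans (inv_pos.mpr hsb) h))
    linarith

-- M
lemma mul_exp_lin_quad_le {b : ℝ} (hb : 0 < b) (c : ℝ) {u : ℝ} (hu : 0 ≤ u) :
    u * rexp (c * u - b * u ^ 2) ≤ rexp (c ^ 2 / (2 * b)) * (√(b / 2))⁻¹ := by
  have h1 : c * u - b * u ^ 2 = (c * u - (b / 2) * u ^ 2) + (-(b / 2) * u ^ 2) := by ring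
  have h2 : c * u - (b / 2) * u ^ 2 ≤ c ^ 2 / (2 * b) := by
    rw [le_div_iff₀ (by linarith : (0:ℝ) < 2 * b)]
    nlinarith [sq_nonneg (c - b * u)]
  calc u * rexp (c * u - b * u ^ 2)
      = rexp (c * u - (b / 2) * u ^ 2) * (u * rexp (-(b / 2) * u ^ 2)) := by
        rw [h1, Real.exp_add]; ring
    _ ≤ rexp (c ^ 2 / (2 * b)) * (√(b / 2))⁻¹ := by
        have hm := mul_exp_neg_mul_sq_le (by linarith : (0:ℝ) < b / 2) hu
        have hnn : 0 ≤ u * rexp (-(b / 2) * u ^ 2) := by positivity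
        exact mul_le_mul (Real.exp_le_exp.mpr h2) hm hnn (Real.exp_nonneg _)

lemma bessel_integrand_eq (a ν t : ℝ) :
    rexp (-a * Real.cosh t) * Real.cosh (ν * t)
      = (rexp (ν * t - a * Real.cosh t) + rexp (-(ν * t) - a * Real.cosh t)) / 2 := by
  rw [show ν * t - a * Real.cosh t = ν * t + -a * Real.cosh t by ring,
    show -(ν * t) - a * Real.cosh t = -(ν * t) + -a * Real.cosh t by ring,
    Real.exp_add, Real.exp_add]
  simp only [Real.cosh_eq]
  ring

lemma integrable_exp_lin_cosh' {a : ℝ} (ha : 0 < a) (c : ℝ) :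
    Integrable fun t : ℝ => rexp (c * t - a * Real.cosh t) := by
  have := integrable_exp_lin_cosh ha one_ne_zero c
  simpa using this

lemma integrableOn_bessel_integrand {a : ℝ} (ha : 0 < a) (ν : ℝ) :
    IntegrableOn (fun t => rexp (-a * Real.cosh t) * Real.cosh (ν * t)) (Ioi 0) := by
  have h1 := integrable_exp_lin_cosh' ha ν
  have h2 := integrable_exp_lin_cosh' ha (-ν)
  have heq : (fun t : ℝ => rexp (-a * Real.cosh t) * Real.cosh (ν * t))
      = fun t => (rexp (ν * t - a * Real.cosh t) + rexp (-(ν * t) - a * Real.cosh t)) / 2 := by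
    funext t; exact bessel_integrand_eq a ν t
  rw [heq]
  have h2' : Integrable fun t : ℝ => rexp (-(ν * t) - a * Real.cosh t) := by
    simpa [neg_mul] using h2
  exact ((h1.add h2').div_const 2).integrableOn

lemma besselK_nonneg (ν a : ℝ) : 0 ≤ besselK ν a :=
  setIntegral_nonneg measurableSet_Ioi fun t _ =>
    mul_nonneg (Real.exp_nonneg _) (Real.cosh_pos _).le

lemma besselK_eq_half_integral {a : ℝ} (ha : 0 < a) (ν : ℝ) :
    besselK ν a = (∫ t : ℝ, rexp (ν * t - a * Real.cosh t)) / 2 := by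
  have habs : ∀ t : ℝ, rexp (-a * Real.cosh |t|) * Real.cosh (ν * |t|)
      = rexp (-a * Real.cosh t) * Real.cosh (ν * t) := by
    intro t
    rcases abs_choice t with h | h <;> rw [h] <;> simp [Real.cosh_neg, mul_neg]
  have hca := integral_comp_abs (f := fun t => rexp (-a * Real.cosh t) * Real.cosh (ν * t))
  have h2 : (2:ℝ) * besselK ν a
      = ∫ t : ℝ, rexp (-a * Real.cosh t) * Real.cosh (ν * t) :=
    calc (2:ℝ) * besselK ν a
        = 2 * ∫ t in Ioi (0:ℝ), rexp (-a * Real.cosh t) * Real.cosh (ν * t) := rfl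
      _ = ∫ t : ℝ, rexp (-a * Real.cosh |t|) * Real.cosh (ν * |t|) := hca.symm
      _ = ∫ t : ℝ, rexp (-a * Real.cosh t) * Real.cosh (ν * t) :=
          integral_congr_ae (ae_of_all _ habs)
  have h1 := integrable_exp_lin_cosh' ha ν
  have h2' : Integrable fun t : ℝ => rexp (-(ν * t) - a * Real.cosh t) := by
    simpa [neg_mul] using integrable_exp_lin_cosh' ha (-ν)
  have h3 : ∫ t : ℝ, rexp (-a * Real.cosh t) * Real.cosh (ν * t)
      = ((∫ t : ℝ, rexp (ν * t - a * Real.cosh t))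
        + ∫ t : ℝ, rexp (-(ν * t) - a * Real.cosh t)) / 2 := by
    rw [← integral_add h1 h2', ← integral_div]
    exact integral_congr_ae (ae_of_all _ fun t => bessel_integrand_eq a ν t)
  have h4 : ∫ t : ℝ, rexp (-(ν * t) - a * Real.cosh t)
      = ∫ t : ℝ, rexp (ν * t - a * Real.cosh t) := by
    rw [← integral_neg_eq_self (fun t : ℝ => rexp (ν * t - a * Real.cosh t)) volume]
    congr 1; funext t; rw [Real.cosh_neg, mul_neg]
  rw [h3, h4] at h2
  linarith

lemma bessel_subst_aux {a : ℝ} (ha : 0 < a) (n : ℕ) :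
    (∫ y in Ioi (0:ℝ), (y ^ (2*n+1))⁻¹ * rexp (-(a^2/(2*y^2) + y^2/2)))
        = (a ^ n)⁻¹ * besselK n a
      ∧ IntegrableOn (fun y => (y ^ (2*n+1))⁻¹ * rexp (-(a^2/(2*y^2) + y^2/2))) (Ioi 0) := by
  have hsa : 0 < √a := Real.sqrt_pos.mpr ha
  set f : ℝ → ℝ := fun s => √a * rexp (-s) with hf
  set f' : ℝ → ℝ := fun s => -(√a * rexp (-s)) with hf'
  set g : ℝ → ℝ := fun y => (y ^ (2*n+1))⁻¹ * rexp (-(a^2/(2*y^2) + y^2/2)) with hg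
  have hder : ∀ s ∈ (univ : Set ℝ), HasDerivWithinAt f (f' s) univ s := by
    intro s _
    have h1 : HasDerivAt (fun s : ℝ => rexp (-s)) (-rexp (-s)) s := by
      simpa [Function.comp_def] using ((Real.hasDerivAt_exp (-s)).comp s (hasDerivAt_neg s))
    have h2 : HasDerivAt f (√a * -rexp (-s)) s := h1.const_mul (√a)
    have : √a * -rexp (-s) = f' s := by simp only [hf']; ring
    rw [this] at h2
    exact h2.hasDerivWithinAt
  have hinj : InjOn f univ := by
    intro x _ y _ hxy
    simp only [hf] at hxy
    have := mul_left_cancel₀ hsa.ne' hxy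
    have := Real.exp_injective this
    linarith
  have himg : f '' univ = Ioi 0 := by
    ext y
    simp only [image_univ, mem_range, mem_Ioi]
    constructor
    · rintro ⟨s, rfl⟩; positivity
    · intro hy
      refine ⟨Real.log (√a) - Real.log y, ?_⟩
      show √a * rexp (-(Real.log (√a) - Real.log y)) = y
      rw [neg_sub, Real.exp_sub, Real.exp_log hy, Real.exp_log hsa]
      field_simp
  have hpt : ∀ s : ℝ, |f' s| • g (f s)
      = (a ^ n)⁻¹ * rexp ((2*(n:ℝ))*s - a * Real.cosh (2*s)) := by
    intro s
    have hr : 0 < rexp (-s) := Real.exp_pos _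
    have habs : |f' s| = √a * rexp (-s) := by
      rw [hf', abs_neg, abs_of_pos (by positivity)]
    have hexp2 : (rexp (-s)) ^ 2 = rexp (-(2*s)) := by
      rw [← Real.exp_nat_mul]; congr 1; push_cast; ring
    have hexpn : (rexp (-s)) ^ (2*n) = rexp (-(2*(n:ℝ)*s)) := by
      rw [← Real.exp_nat_mul]; congr 1; push_cast; ring
    have hfs2 : (f s) ^ 2 = a * rexp (-(2*s)) := by
      rw [hf]; rw [mul_pow, Real.sq_sqrt ha.le, hexp2]
    have hexpo : a^2/(2*(f s)^2) + (f s)^2/2 = a * Real.cosh (2*s) := by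
      rw [hfs2, Real.cosh_eq]
      have h1 : rexp (-(2*s)) = (rexp (2*s))⁻¹ := Real.exp_neg _
      rw [h1]
      have h2 : (0:ℝ) < rexp (2*s) := Real.exp_pos _
      field_simp
    have hpow : (f s) ^ (2*n+1) = (√a * rexp (-s)) * ((a:ℝ)^n * rexp (-(2*(n:ℝ)*s))) := by
      rw [hf, pow_succ, mul_pow, pow_mul, Real.sq_sqrt ha.le, hexpn]
      ring
    have hne : √a * rexp (-s) ≠ 0 := by positivity
    have h3 : rexp ((2*(n:ℝ))*s - a * Real.cosh (2*s))
        = rexp ((2*(n:ℝ))*s) * rexp (-(a * Real.cosh (2*s))) := by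
      rw [sub_eq_add_neg, Real.exp_add]
    have h4 : (rexp (-(2*(n:ℝ)*s)))⁻¹ = rexp ((2*(n:ℝ))*s) := by
      rw [← Real.exp_neg]; congr 1; ring
    rw [smul_eq_mul, habs, hg]
    simp only [hpow, hexpo]
    rw [h3]
    simp only [mul_inv]
    rw [h4]
    have hA : (a:ℝ)^n ≠ 0 := by positivity
    have hS : √a ≠ 0 := hsa.ne'
    have hE : rexp (-s) ≠ 0 := hr.ne'
    field_simp
  have key := integral_image_eq_integral_abs_deriv_smul MeasurableSet.univ hder hinj g
  have hiff := integrableOn_image_iff_integrableOn_abs_deriv_smul MeasurableSet.univ hder hinj g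
  have hInt : Integrable (fun s : ℝ => (a ^ n)⁻¹ * rexp ((2*(n:ℝ))*s - a * Real.cosh (2*s))) := by
    exact (integrable_exp_lin_cosh ha two_ne_zero (2*(n:ℝ))).const_mul _
  have hInt' : IntegrableOn (fun s => |f' s| • g (f s)) univ := by
    rw [integrableOn_univ]
    exact hInt.congr (ae_of_all _ fun s => (hpt s).symm)
  constructor
  · have h5 : ∫ y in Ioi (0:ℝ), g y = ∫ s : ℝ, |f' s| • g (f s) := by
      rw [← himg, key, Measure.restrict_univ]
    rw [h5]
    have h6 : ∫ s : ℝ, |f' s| • g (f s)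
        = (a ^ n)⁻¹ * ∫ s : ℝ, rexp ((2*(n:ℝ))*s - a * Real.cosh (2*s)) := by
      rw [← integral_const_mul]
      exact integral_congr_ae (ae_of_all _ hpt)
    rw [h6]
    congr 1
    have h7 := MeasureTheory.Measure.integral_comp_mul_left
      (fun t => rexp ((n:ℝ)*t - a * Real.cosh t)) 2
    have h8 : (fun s : ℝ => rexp ((n:ℝ)*(2*s) - a * Real.cosh (2*s)))
        = fun s : ℝ => rexp ((2*(n:ℝ))*s - a * Real.cosh (2*s)) := by
      funext s; ring_nf
    rw [h8] at h7
    rw [h7, besselK_eq_half_integral ha (n:ℝ), smul_eq_mul,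
      abs_of_nonneg (by norm_num : (0:ℝ) ≤ 2⁻¹)]
    ring
  · rw [← himg, hiff]
    exact hInt'

open scoped ENNReal NNReal
open ProbabilityTheory

lemma lintegral_Iio_neg (F : ℝ → ℝ≥0∞) (hF : Measurable F) :
    ∫⁻ y in Iio (0:ℝ), F y = ∫⁻ y in Ioi (0:ℝ), F (-y) := by
  have hpre : (Neg.neg ⁻¹' (Iio (0:ℝ))) = Ioi 0 := by
    ext x; simp
  have h1 : (volume : Measure ℝ).restrict (Iio 0)
      = ((volume : Measure ℝ).restrict (Ioi 0)).map Neg.neg := by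
    have h2 := Measure.restrict_map (measurable_neg : Measurable (Neg.neg : ℝ → ℝ))
      (measurableSet_Iio (a := (0:ℝ))) (μ := (volume : Measure ℝ))
    rw [Measure.map_neg_eq_self, hpre] at h2
    exact h2
  rw [h1, lintegral_map hF measurable_neg]


lemma gauss_prod_pos {y mq z aq : ℝ} (hy : 0 < y) (haz : aq^2 = z^2) :
    (√(2*π*1))⁻¹ * rexp (-(y-0)^2/(2*1)) * ((√(2*π*y^2))⁻¹ * rexp (-(z - y*mq)^2/(2*y^2)))
      = (2*π*y)⁻¹ * (rexp (-(aq^2/(2*y^2) + y^2/2)) * (rexp (-mq^2/2) * rexp (mq*z/y))) := by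
  have h2π : (0:ℝ) ≤ 2*π := by positivity
  have hyne : y ≠ 0 := ne_of_gt hy
  have hQQ : √(2*π) * √(2*π) = 2*π := Real.mul_self_sqrt h2π
  have hs2 : √(2*π*y^2) = √(2*π) * y := by
    rw [Real.sqrt_mul h2π, Real.sqrt_sq hy.le]
  have hco : (√(2*π))⁻¹ * (√(2*π)*y)⁻¹ = (2*π*y)⁻¹ := by
    rw [mul_inv, ← mul_assoc, ← mul_inv, hQQ, ← mul_inv]
  have key : rexp (-(y-0)^2/(2*1)) * rexp (-(z - y*mq)^2/(2*y^2))
      = rexp (-(aq^2/(2*y^2) + y^2/2)) * (rexp (-mq^2/2) * rexp (mq*z/y)) := by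
    rw [← Real.exp_add, ← Real.exp_add, ← Real.exp_add]
    congr 1
    rw [haz]
    field_simp
    ring
  calc (√(2*π*1))⁻¹ * rexp (-(y-0)^2/(2*1)) * ((√(2*π*y^2))⁻¹ * rexp (-(z - y*mq)^2/(2*y^2)))
      = ((√(2*π))⁻¹ * (√(2*π)*y)⁻¹)
          * (rexp (-(y-0)^2/(2*1)) * rexp (-(z - y*mq)^2/(2*y^2))) := by
        rw [mul_one, hs2]; ring
    _ = (2*π*y)⁻¹ * (rexp (-(aq^2/(2*y^2) + y^2/2)) * (rexp (-mq^2/2) * rexp (mq*z/y))) := by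
        rw [key, hco]

lemma gauss_prod_neg {y mq z aq : ℝ} (hy : 0 < y) (haz : aq^2 = z^2) :
    (√(2*π*1))⁻¹ * rexp (-(-y-0)^2/(2*1))
        * ((√(2*π*(-y)^2))⁻¹ * rexp (-(z - -y*mq)^2/(2*(-y)^2)))
      = (2*π*y)⁻¹ * (rexp (-(aq^2/(2*y^2) + y^2/2)) * (rexp (-mq^2/2) * rexp (-(mq*z/y)))) := by
  have h2π : (0:ℝ) ≤ 2*π := by positivity
  have hyne : y ≠ 0 := ne_of_gt hy
  have hQQ : √(2*π) * √(2*π) = 2*π := Real.mul_self_sqrt h2π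
  have hs2 : √(2*π*(-y)^2) = √(2*π) * y := by
    rw [neg_sq, Real.sqrt_mul h2π, Real.sqrt_sq hy.le]
  have hco : (√(2*π))⁻¹ * (√(2*π)*y)⁻¹ = (2*π*y)⁻¹ := by
    rw [mul_inv, ← mul_assoc, ← mul_inv, hQQ, ← mul_inv]
  have key : rexp (-(-y-0)^2/(2*1)) * rexp (-(z - -y*mq)^2/(2*(-y)^2))
      = rexp (-(aq^2/(2*y^2) + y^2/2)) * (rexp (-mq^2/2) * rexp (-(mq*z/y))) := by
    rw [← Real.exp_add, ← Real.exp_add, ← Real.exp_add]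
    congr 1
    rw [haz, neg_sq]
    field_simp
    ring
  calc (√(2*π*1))⁻¹ * rexp (-(-y-0)^2/(2*1))
        * ((√(2*π*(-y)^2))⁻¹ * rexp (-(z - -y*mq)^2/(2*(-y)^2)))
      = ((√(2*π))⁻¹ * (√(2*π)*y)⁻¹)
          * (rexp (-(-y-0)^2/(2*1)) * rexp (-(z - -y*mq)^2/(2*(-y)^2))) := by
        rw [mul_one, hs2]; ring
    _ = _ := by rw [key, hco]

lemma core_density (m z : ℝ) (hz : z ≠ 0) :
    (∫⁻ y, gaussianPDF 0 1 y * gaussianPDF (y * m) ⟨y^2, sq_nonneg y⟩ z)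
      = ENNReal.ofReal ((1/π) * rexp (-m^2/2)
          * ∑' n : ℕ, m^(2*n) * |z|^n / (Nat.factorial (2*n) : ℝ) * besselK n |z|) := by
  set a := |z| with ha
  have ha0 : 0 < a := abs_pos.mpr hz
  have h2π : (0:ℝ) ≤ 2*π := by positivity
  set H : ℝ → ℝ := fun y => gaussianPDFReal 0 1 y * gaussianPDFReal (y*m) ⟨y^2, sq_nonneg y⟩ z
    with hHdef
  have hHmeas : Measurable H := by
    simp only [hHdef, gaussianPDFReal]
    fun_prop
  have hHnn : ∀ y : ℝ, 0 ≤ H y := fun y =>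
    mul_nonneg (gaussianPDFReal_nonneg _ _ _) (gaussianPDFReal_nonneg _ _ _)
  set c : ℝ := (1/π) * rexp (-m^2/2) with hc
  have hc0 : 0 ≤ c := by positivity
  set P : ℝ → ℝ := fun y => y⁻¹ * rexp (-(a^2/(2*y^2) + y^2/2)) * Real.cosh (m*z/y)
    with hPdef
  set T : ℕ → ℝ → ℝ := fun n y => (m^(2*n) * a^(2*n) / (Nat.factorial (2*n) : ℝ))
      * ((y^(2*n+1))⁻¹ * rexp (-(a^2/(2*y^2) + y^2/2))) with hTdef
  set S : ℕ → ℝ := fun n => m^(2*n) * a^n / (Nat.factorial (2*n) : ℝ) * besselK n a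
    with hSdef
  -- Step 1: split and reflect
  have hof : ∀ y : ℝ, gaussianPDF 0 1 y * gaussianPDF (y*m) ⟨y^2, sq_nonneg y⟩ z
      = ENNReal.ofReal (H y) := by
    intro y
    simp only [gaussianPDF, hHdef]
    rw [← ENNReal.ofReal_mul (gaussianPDFReal_nonneg _ _ _)]
  have hsplit : (∫⁻ y, gaussianPDF 0 1 y * gaussianPDF (y*m) ⟨y^2, sq_nonneg y⟩ z)
      = ∫⁻ y in Ioi (0:ℝ), ENNReal.ofReal (H (-y) + H y) := by
    calc (∫⁻ y, gaussianPDF 0 1 y * gaussianPDF (y*m) ⟨y^2, sq_nonneg y⟩ z)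
        = ∫⁻ y, ENNReal.ofReal (H y) := lintegral_congr hof
      _ = ∫⁻ y in Iio 0 ∪ Ioi 0, ENNReal.ofReal (H y) := by
          rw [Iio_union_Ioi,
            ← lintegral_add_compl (fun y => ENNReal.ofReal (H y))
              (measurableSet_singleton (0:ℝ)),
            setLIntegral_measure_zero _ _ (by simp), zero_add]
      _ = (∫⁻ y in Iio (0:ℝ), ENNReal.ofReal (H y))
            + ∫⁻ y in Ioi (0:ℝ), ENNReal.ofReal (H y) := by
          rw [lintegral_union measurableSet_Ioi
            ((Iic_disjoint_Ioi le_rfl).mono_left Iio_subset_Iic_self)]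
      _ = (∫⁻ y in Ioi (0:ℝ), ENNReal.ofReal (H (-y)))
            + ∫⁻ y in Ioi (0:ℝ), ENNReal.ofReal (H y) := by
          rw [lintegral_Iio_neg _ hHmeas.ennreal_ofReal]
      _ = ∫⁻ y in Ioi (0:ℝ),
            (ENNReal.ofReal (H (-y)) + ENNReal.ofReal (H y)) := by
          have hm : Measurable fun y : ℝ => ENNReal.ofReal (H (-y)) :=
            (hHmeas.comp measurable_neg).ennreal_ofReal
          rw [← lintegral_add_left hm]
      _ = ∫⁻ y in Ioi (0:ℝ), ENNReal.ofReal (H (-y) + H y) :=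
          lintegral_congr fun y => (ENNReal.ofReal_add (hHnn _) (hHnn _)).symm
  -- Step 2: pointwise identity on Ioi 0
  have haz : a^2 = z^2 := sq_abs z
  have hHsum : ∀ y ∈ Ioi (0:ℝ), H (-y) + H y = c * P y := by
    intro y hy
    rw [mem_Ioi] at hy
    have hyne : y ≠ 0 := ne_of_gt hy
    simp only [hHdef, hPdef, gaussianPDFReal, NNReal.coe_one]
    show (√(2*π*1))⁻¹ * rexp (-(-y-0)^2/(2*1))
          * ((√(2*π*(-y)^2))⁻¹ * rexp (-(z - -y*m)^2/(2*(-y)^2)))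
        + (√(2*π*1))⁻¹ * rexp (-(y-0)^2/(2*1))
          * ((√(2*π*y^2))⁻¹ * rexp (-(z - y*m)^2/(2*y^2)))
      = c * (y⁻¹ * rexp (-(a^2/(2*y^2) + y^2/2)) * Real.cosh (m*z/y))
    rw [gauss_prod_pos hy haz, gauss_prod_neg hy haz, Real.cosh_eq, hc]
    field_simp
    ring
  -- Step 3: series expansion of P on Ioi 0
  have hTnn : ∀ (n : ℕ) (y : ℝ), y ∈ Ioi (0:ℝ) → 0 ≤ T n y := by
    intro n y hy
    rw [mem_Ioi] at hy
    apply mul_nonneg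
    · apply div_nonneg _ (by positivity)
      exact mul_nonneg ((even_two_mul n).pow_nonneg m) ((even_two_mul n).pow_nonneg a)
    · exact mul_nonneg (inv_nonneg.mpr (pow_pos hy _).le) (Real.exp_nonneg _)
  have hPT : ∀ y ∈ Ioi (0:ℝ), ENNReal.ofReal (P y) = ∑' n : ℕ, ENNReal.ofReal (T n y) := by
    intro y hy
    rw [mem_Ioi] at hy
    have hyne : y ≠ 0 := ne_of_gt hy
    have hsumm : Summable (fun n : ℕ => (m*z/y)^(2*n)/((2*n).factorial : ℝ)) :=
      (Real.hasSum_cosh _).summable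
    have hTsum : Summable (fun n => T n y) := by
      refine ((hsumm.mul_left (y⁻¹ * rexp (-(a^2/(2*y^2) + y^2/2)))).congr fun n => ?_)
      rw [hTdef]
      have hzn : z^(2*n) = a^(2*n) := by
        rw [ha, ← abs_pow]
        exact (abs_of_nonneg ((even_two_mul n).pow_nonneg z)).symm
      rw [div_pow, mul_pow, hzn]
      field_simp
      ring
    have hPy : P y = ∑' n : ℕ, T n y := by
      have hstep : ∑' n : ℕ, T n y
          = ∑' n : ℕ, (y⁻¹ * rexp (-(a^2/(2*y^2) + y^2/2)))
              * ((m*z/y)^(2*n)/((2*n).factorial : ℝ)) := by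
        refine tsum_congr fun n => ?_
        have hzn : z^(2*n) = a^(2*n) := by
          rw [ha, ← abs_pow]
          exact (abs_of_nonneg ((even_two_mul n).pow_nonneg z)).symm
        rw [hTdef]
        rw [div_pow, mul_pow, hzn]
        field_simp
        ring
      rw [hstep, tsum_mul_left, ← Real.cosh_eq_tsum, hPdef]
    rw [hPy, ENNReal.ofReal_tsum_of_nonneg (fun n => hTnn n y hy) hTsum]
  -- Step 4: per-term integral
  have hTmeas : ∀ n : ℕ, Measurable fun y => ENNReal.ofReal (T n y) := by
    intro n
    apply Measurable.ennreal_ofReal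
    simp only [hTdef]
    fun_prop
  have hterm : ∀ n : ℕ, (∫⁻ y in Ioi (0:ℝ), ENNReal.ofReal (T n y)) = ENNReal.ofReal (S n) := by
    intro n
    have hb := bessel_subst_aux ha0 n
    have hcn : 0 ≤ m^(2*n) * a^(2*n) / (Nat.factorial (2*n) : ℝ) :=
      div_nonneg (mul_nonneg ((even_two_mul n).pow_nonneg m)
        ((even_two_mul n).pow_nonneg a)) (by positivity)
    calc (∫⁻ y in Ioi (0:ℝ), ENNReal.ofReal (T n y))
        = ∫⁻ y in Ioi (0:ℝ), ENNReal.ofReal (m^(2*n) * a^(2*n) / (Nat.factorial (2*n) : ℝ))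
            * ENNReal.ofReal ((y^(2*n+1))⁻¹ * rexp (-(a^2/(2*y^2) + y^2/2))) := by
          refine lintegral_congr fun y => ?_
          rw [hTdef, ENNReal.ofReal_mul hcn]
      _ = ENNReal.ofReal (m^(2*n) * a^(2*n) / (Nat.factorial (2*n) : ℝ))
            * ∫⁻ y in Ioi (0:ℝ),
                ENNReal.ofReal ((y^(2*n+1))⁻¹ * rexp (-(a^2/(2*y^2) + y^2/2))) := by
          rw [lintegral_const_mul' _ _ ENNReal.ofReal_ne_top]
      _ = ENNReal.ofReal (m^(2*n) * a^(2*n) / (Nat.factorial (2*n) : ℝ))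
            * ENNReal.ofReal ((a^n)⁻¹ * besselK n a) := by
          have hnn : (0 : ℝ → ℝ) ≤ᵐ[volume.restrict (Ioi (0:ℝ))]
              fun y : ℝ => (y^(2*n+1))⁻¹ * rexp (-(a^2/(2*y^2) + y^2/2)) := by
            filter_upwards [ae_restrict_mem measurableSet_Ioi] with y hy
            rw [mem_Ioi] at hy
            exact mul_nonneg (inv_nonneg.mpr (pow_pos hy _).le) (Real.exp_nonneg _)
          rw [← hb.1, ← ofReal_integral_eq_lintegral_ofReal hb.2 hnn]
      _ = ENNReal.ofReal (S n) := by
          rw [← ENNReal.ofReal_mul hcn, hSdef]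
          congr 1
          have hap : (a:ℝ)^(2*n) = a^n * a^n := by rw [two_mul, pow_add]
          have hanne : (a:ℝ)^n ≠ 0 := (pow_pos ha0 n).ne'
          field_simp [hap]
          ring
  -- Step 5: the series integral identity
  have hmain : (∫⁻ y in Ioi (0:ℝ), ENNReal.ofReal (P y)) = ∑' n : ℕ, ENNReal.ofReal (S n) := by
    calc (∫⁻ y in Ioi (0:ℝ), ENNReal.ofReal (P y))
        = ∫⁻ y in Ioi (0:ℝ), ∑' n : ℕ, ENNReal.ofReal (T n y) :=
          setLIntegral_congr_fun_ae measurableSet_Ioi (ae_of_all _ hPT)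
      _ = ∑' n : ℕ, ∫⁻ y in Ioi (0:ℝ), ENNReal.ofReal (T n y) :=
          lintegral_tsum fun n => (hTmeas n).aemeasurable
      _ = ∑' n : ℕ, ENNReal.ofReal (S n) := tsum_congr hterm
  -- Step 6: finiteness and summability
  have hSnn : ∀ n, 0 ≤ S n := by
    intro n
    rw [hSdef]
    apply mul_nonneg _ (besselK_nonneg _ _)
    apply div_nonneg _ (by positivity)
    exact mul_nonneg ((even_two_mul n).pow_nonneg m) (by positivity)
  have hfin : (∑' n : ℕ, ENNReal.ofReal (S n)) ≠ ⊤ := by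
    rw [← hmain]
    set C : ℝ := rexp (|m*z|^2/(2*(a^2/2))) * (√(a^2/2/2))⁻¹ with hC
    have hbound : ∀ y ∈ Ioi (0:ℝ), P y ≤ C * rexp (-(1/2) * y^2) := by
      intro y hy
      rw [mem_Ioi] at hy
      have hyne : y ≠ 0 := ne_of_gt hy
      have hsplit2 : rexp (-(a^2/(2*y^2) + y^2/2))
          = rexp (-(a^2/2) * (y⁻¹)^2) * rexp (-(1/2) * y^2) := by
        rw [← Real.exp_add]
        congr 1
        field_simp
        ring
      have hcosh : Real.cosh (m*z/y) ≤ rexp (|m*z| * y⁻¹) := by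
        refine (cosh_le_exp_abs _).trans (Real.exp_le_exp.mpr ?_)
        rw [abs_div, abs_of_pos hy, div_eq_mul_inv]
      have hXA : rexp (|m*z| * y⁻¹) * rexp (-(a^2/2) * (y⁻¹)^2)
          = rexp (|m*z| * y⁻¹ - (a^2/2) * (y⁻¹)^2) := by
        rw [← Real.exp_add]
        congr 1
        ring
      have h1 : P y ≤ (y⁻¹ * rexp (|m*z| * y⁻¹ - (a^2/2) * (y⁻¹)^2)) * rexp (-(1/2) * y^2) := by
        rw [hPdef]
        simp only
        rw [hsplit2]
        calc y⁻¹ * (rexp (-(a^2/2) * (y⁻¹)^2) * rexp (-(1/2) * y^2)) * Real.cosh (m*z/y)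
            ≤ y⁻¹ * (rexp (-(a^2/2) * (y⁻¹)^2) * rexp (-(1/2) * y^2)) * rexp (|m*z| * y⁻¹) :=
            mul_le_mul_of_nonneg_left hcosh (by positivity)
          _ = (y⁻¹ * (rexp (|m*z| * y⁻¹) * rexp (-(a^2/2) * (y⁻¹)^2))) * rexp (-(1/2) * y^2) := by
              ring
          _ = (y⁻¹ * rexp (|m*z| * y⁻¹ - (a^2/2) * (y⁻¹)^2)) * rexp (-(1/2) * y^2) := by
              rw [hXA]
      refine h1.trans ?_
      refine mul_le_mul_of_nonneg_right ?_ (Real.exp_nonneg _)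
      have := mul_exp_lin_quad_le (b := a^2/2) (by positivity) (|m*z|)
        (inv_nonneg.mpr hy.le)
      calc y⁻¹ * rexp (|m*z| * y⁻¹ - (a^2/2) * (y⁻¹)^2)
          ≤ rexp (|m*z|^2/(2*(a^2/2))) * (√(a^2/2/2))⁻¹ := this
        _ = C := hC.symm
    have hCint : Integrable (fun y : ℝ => C * rexp (-(1/2) * y^2)) :=
      (integrable_exp_neg_mul_sq (by norm_num : (0:ℝ) < 1/2)).const_mul C
    have hlt : (∫⁻ y in Ioi (0:ℝ), ENNReal.ofReal (P y)) < ⊤ :=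
      calc (∫⁻ y in Ioi (0:ℝ), ENNReal.ofReal (P y))
          ≤ ∫⁻ y in Ioi (0:ℝ), ENNReal.ofReal (C * rexp (-(1/2) * y^2)) := by
            refine setLIntegral_mono' measurableSet_Ioi fun y hy => ?_
            exact ENNReal.ofReal_le_ofReal (hbound y hy)
        _ ≤ ∫⁻ y : ℝ, ENNReal.ofReal (C * rexp (-(1/2) * y^2)) :=
            setLIntegral_le_lintegral _ _
        _ < ⊤ := hCint.lintegral_lt_top
    exact hlt.ne
  have hSsum : Summable S := by
    have h1 := ENNReal.summable_toReal hfin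
    refine h1.congr fun n => ?_
    rw [ENNReal.toReal_ofReal (hSnn n)]
  calc (∫⁻ y, gaussianPDF 0 1 y * gaussianPDF (y*m) ⟨y^2, sq_nonneg y⟩ z)
      = ∫⁻ y in Ioi (0:ℝ), ENNReal.ofReal (H (-y) + H y) := hsplit
    _ = ∫⁻ y in Ioi (0:ℝ), ENNReal.ofReal (c * P y) :=
        setLIntegral_congr_fun_ae measurableSet_Ioi (ae_of_all _ fun y hy => by rw [hHsum y hy])
    _ = ∫⁻ y in Ioi (0:ℝ), ENNReal.ofReal c * ENNReal.ofReal (P y) :=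
        lintegral_congr fun y => ENNReal.ofReal_mul hc0
    _ = ENNReal.ofReal c * ∫⁻ y in Ioi (0:ℝ), ENNReal.ofReal (P y) :=
        lintegral_const_mul' _ _ ENNReal.ofReal_ne_top
    _ = ENNReal.ofReal c * ∑' n : ℕ, ENNReal.ofReal (S n) := by rw [hmain]
    _ = ENNReal.ofReal c * ENNReal.ofReal (∑' n : ℕ, S n) := by
        rw [ENNReal.ofReal_tsum_of_nonneg hSnn hSsum]
    _ = ENNReal.ofReal (c * ∑' n : ℕ, S n) := (ENNReal.ofReal_mul hc0).symm


theorem product_normal_one_zero_mean_density {Ω : Type*} [MeasureSpace Ω]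
    [IsProbabilityMeasure (ℙ : Measure Ω)]
    (X Y : Ω → ℝ) (hXY : IndepFun X Y ℙ) (μX : ℝ)
    (hX : Measure.map X ℙ = gaussianReal μX 1) (hY : Measure.map Y ℙ = gaussianReal 0 1) :
    Measure.map (fun ω => X ω * Y ω) ℙ
      = volume.withDensity (fun x => ENNReal.ofReal
          ((1 / π) * Real.exp (-μX ^ 2 / 2)
            * ∑' n : ℕ, μX ^ (2 * n) * |x| ^ n / (Nat.factorial (2 * n) : ℝ)
                * besselK n |x|)) := by
  have hXm : AEMeasurable X ℙ := aemeasurable_of_map_neZero (by rw [hX]; infer_instance)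
  have hYm : AEMeasurable Y ℙ := aemeasurable_of_map_neZero (by rw [hY]; infer_instance)
  have hprod : Measure.map (fun ω => (X ω, Y ω)) ℙ
      = (gaussianReal μX 1).prod (gaussianReal 0 1) := by
    rw [← hX, ← hY]
    exact (indepFun_iff_map_prod_eq_prod_map_map hXm hYm).mp hXY
  have hmap : Measure.map (fun ω => X ω * Y ω) ℙ
      = ((gaussianReal μX 1).prod (gaussianReal 0 1)).map (fun p : ℝ × ℝ => p.1 * p.2) := by
    rw [← hprod,
      AEMeasurable.map_map_of_aemeasurable measurable_mul.aemeasurable (hXm.prodMk hYm)]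
    rfl
  rw [hmap]
  set D : ℝ → ℝ≥0∞ :=
    fun z => ∫⁻ y, gaussianPDF 0 1 y * gaussianPDF (y * μX) ⟨y^2, sq_nonneg y⟩ z with hD
  have hjm : Measurable fun p : ℝ × ℝ =>
      gaussianPDF 0 1 p.2 * gaussianPDF (p.2 * μX) ⟨p.2^2, sq_nonneg p.2⟩ p.1 := by
    apply Measurable.fun_mul
    · exact (measurable_gaussianPDF 0 1).comp measurable_snd
    · apply Measurable.ennreal_ofReal
      show Measurable fun p : ℝ × ℝ =>
        (√(2*π*(((⟨p.2^2, sq_nonneg p.2⟩ : ℝ≥0)):ℝ)))⁻¹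
          * rexp (-(p.1 - p.2 * μX)^2/(2*(((⟨p.2^2, sq_nonneg p.2⟩ : ℝ≥0)):ℝ)))
      show Measurable fun p : ℝ × ℝ =>
        (√(2*π*(p.2^2)))⁻¹ * rexp (-(p.1 - p.2 * μX)^2/(2*(p.2^2)))
      fun_prop
  have hDmeas : Measurable D := by
    rw [hD]
    exact Measurable.lintegral_prod_right hjm
  have key : ((gaussianReal μX 1).prod (gaussianReal 0 1)).map (fun p : ℝ × ℝ => p.1 * p.2)
      = volume.withDensity D := by
    ext s hs
    rw [Measure.map_apply measurable_mul hs, Measure.prod_apply_symm (measurable_mul hs),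
      withDensity_apply _ hs]
    have hne : ∀ᵐ y ∂(gaussianReal 0 1), y ≠ (0:ℝ) := by
      rw [ae_iff]
      have h0 : (gaussianReal 0 1) {(0:ℝ)} = 0 :=
        gaussianReal_absolutelyContinuous 0 one_ne_zero Real.volume_singleton
      simpa using h0
    have hae : ∀ᵐ y ∂(gaussianReal 0 1),
        (gaussianReal μX 1) ((fun x => (x, y)) ⁻¹' ((fun p : ℝ × ℝ => p.1 * p.2) ⁻¹' s))
          = ∫⁻ z in s, gaussianPDF (y * μX) ⟨y^2, sq_nonneg y⟩ z := by
      filter_upwards [hne] with y hy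
      have hpre : ((fun x => (x, y)) ⁻¹' ((fun p : ℝ × ℝ => p.1 * p.2) ⁻¹' s))
          = (fun x => x * y) ⁻¹' s := rfl
      have hvne : ((⟨y^2, sq_nonneg y⟩ : ℝ≥0)) ≠ 0 := by
        intro h
        apply hy
        have := congrArg (fun v : ℝ≥0 => (v : ℝ)) h
        replace this : y^2 = 0 := this
        exact pow_eq_zero_iff (n := 2) (by norm_num) |>.mp this
      rw [hpre, ← Measure.map_apply (measurable_mul_const y) hs,
        gaussianReal_map_mul_const y, mul_one, gaussianReal_apply (v := NNReal.mk (y^2) (sq_nonneg y)) _ hvne s]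
      rfl
    rw [lintegral_congr_ae hae, gaussianReal_of_var_ne_zero 0 one_ne_zero]
    have hmeas2 : Measurable fun y : ℝ =>
        ∫⁻ z in s, gaussianPDF (y * μX) ⟨y^2, sq_nonneg y⟩ z := by
      apply Measurable.lintegral_prod_right (f := fun y z =>
        gaussianPDF (y * μX) ⟨y^2, sq_nonneg y⟩ z)
      apply Measurable.ennreal_ofReal
      show Measurable fun p : ℝ × ℝ =>
        (√(2*π*(p.1^2)))⁻¹ * rexp (-(p.2 - p.1 * μX)^2/(2*(p.1^2)))
      fun_prop
    rw [lintegral_withDensity_eq_lintegral_mul _ (measurable_gaussianPDF 0 1) hmeas2]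
    have hpush : ∀ y : ℝ, gaussianPDF 0 1 y * ∫⁻ z in s, gaussianPDF (y * μX) ⟨y^2, sq_nonneg y⟩ z
        = ∫⁻ z in s, gaussianPDF 0 1 y * gaussianPDF (y * μX) ⟨y^2, sq_nonneg y⟩ z := by
      intro y
      rw [lintegral_const_mul' _ _ (by rw [gaussianPDF]; exact ENNReal.ofReal_ne_top)]
    calc ∫⁻ y, gaussianPDF 0 1 y * ∫⁻ z in s, gaussianPDF (y * μX) ⟨y^2, sq_nonneg y⟩ z
        = ∫⁻ y, ∫⁻ z in s, gaussianPDF 0 1 y * gaussianPDF (y * μX) ⟨y^2, sq_nonneg y⟩ z :=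
          lintegral_congr hpush
      _ = ∫⁻ z in s, ∫⁻ y, gaussianPDF 0 1 y * gaussianPDF (y * μX) ⟨y^2, sq_nonneg y⟩ z := by
          apply lintegral_lintegral_swap
          exact (hjm.comp measurable_swap).aemeasurable
      _ = ∫⁻ z in s, D z := by rw [hD]
  rw [key]
  apply withDensity_congr_ae
  have h0 : ∀ᵐ z : ℝ ∂volume, z ≠ 0 := by
    rw [ae_iff]
    simpa using Real.volume_singleton
  filter_upwards [h0] with z hz
  exact core_density μX z hz
end
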